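/- arXiv:2603.16962 — 6 statements merged into one kernel-verified Lean document; each statement's English description precedes it below -/
import Mathlib

section
/- Let n ∈ ℕ and let J ∈ M_{2n} be written in block form J = Σ_{i,j=1}^n E_{ij} ⊗ J_{ij} with 2×2 blocks J_{ij}. Assume J is doubly nonnegative (positive semidefinite with all entries nonnegative) and that tr(J_{ij}) = δ_{ij} for all 1 ≤ i,j ≤ n. Then J is completely positive, i.e., J = Σ_{t=1}^s x_t x_tᵀ for some entrywise nonnegative vectors x_t ∈ ℝ^{2n}. -/
open Matrix

/-- A real matrix is completely positive if it is a finite sum of rank-one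
matrices `x xᵀ` with `x` entrywise nonnegative. -/
def IsCPMatrix {ι : Type*} [Fintype ι] (A : Matrix ι ι ℝ) : Prop :=
  ∃ (s : ℕ) (x : Fin s → ι → ℝ), (∀ t i, 0 ≤ x t i) ∧
    A = ∑ t, Matrix.vecMulVec (x t) (x t)


lemma simplex_min {ι : Type*} [Fintype ι] [DecidableEq ι] [Nonempty ι]
    (A : Matrix ι ι ℝ) (hsymm : ∀ i j, A i j = A j i) :
    ∃ w : ι → ℝ, (∀ i, 0 ≤ w i) ∧ (∑ i, w i = 1) ∧
      ∀ i, w ⬝ᵥ A *ᵥ w ≤ (A *ᵥ w) i := by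
  classical
  set S : Set (ι → ℝ) := {w | (∀ i, 0 ≤ w i) ∧ ∑ i, w i = 1} with hS
  have hScl : IsClosed S := by
    have h1 : IsClosed {w : ι → ℝ | ∀ i, 0 ≤ w i} := by
      have : {w : ι → ℝ | ∀ i, 0 ≤ w i} = ⋂ i, {w : ι → ℝ | 0 ≤ w i} := by
        ext; simp
      rw [this]
      exact isClosed_iInter fun i => isClosed_le continuous_const (continuous_apply i)
    have h2 : IsClosed {w : ι → ℝ | ∑ i, w i = 1} :=
      isClosed_eq (by continuity) continuous_const
    exact h1.inter h2
  have hSsub : S ⊆ Set.Icc (0 : ι → ℝ) 1 := by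
    rintro w ⟨h1, h2⟩
    refine ⟨fun i => h1 i, fun i => ?_⟩
    calc w i ≤ ∑ j, w j := Finset.single_le_sum (fun j _ => h1 j) (Finset.mem_univ i)
    _ = 1 := h2
  have hScomp : IsCompact S := (isCompact_Icc).of_isClosed_subset hScl hSsub
  have hSne : S.Nonempty := by
    refine ⟨fun _ => (Fintype.card ι : ℝ)⁻¹, fun i => by positivity, ?_⟩
    simp [Finset.sum_const, Finset.card_univ]
  have hcont : ContinuousOn (fun w : ι → ℝ => w ⬝ᵥ A *ᵥ w) S := by
    apply Continuous.continuousOn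
    simp only [dotProduct, mulVec]
    exact continuous_finset_sum _ fun i _ => (continuous_apply i).mul
      (continuous_finset_sum _ fun j _ => continuous_const.mul (continuous_apply j))
  obtain ⟨w, hwS, hmin⟩ := hScomp.exists_isMinOn hSne hcont
  obtain ⟨hw0, hw1⟩ := hwS
  refine ⟨w, hw0, hw1, fun i => ?_⟩
  set e : ι → ℝ := Pi.single i 1 with he
  have hesum : ∑ j, e j = 1 := by
    rw [he, Finset.sum_pi_single']
    simp
  have hswap : ∀ u v : ι → ℝ, u ⬝ᵥ A *ᵥ v = v ⬝ᵥ A *ᵥ u := by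
    intro u v
    simp only [dotProduct, mulVec, Finset.mul_sum]
    rw [Finset.sum_comm]
    exact Finset.sum_congr rfl fun j _ => Finset.sum_congr rfl fun k _ => by
      rw [hsymm j k]; ring
  set d : ι → ℝ := e - w with hd
  have expand : ∀ t : ℝ, (w + t • d) ⬝ᵥ A *ᵥ (w + t • d)
      = w ⬝ᵥ A *ᵥ w + 2*t*(d ⬝ᵥ A *ᵥ w) + t^2 * (d ⬝ᵥ A *ᵥ d) := by
    intro t
    rw [mulVec_add, mulVec_smul, dotProduct_add, add_dotProduct, add_dotProduct]
    simp only [smul_dotProduct, dotProduct_smul, smul_eq_mul]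
    rw [hswap w d]
    ring
  have hmem : ∀ t : ℝ, 0 ≤ t → t ≤ 1 → (w + t • d) ∈ S := by
    intro t ht0 ht1
    constructor
    · intro j
      have h1 : (w + t • d) j = (1 - t) * w j + t * e j := by
        simp only [Pi.add_apply, Pi.smul_apply, hd, Pi.sub_apply, smul_eq_mul]; ring
      rw [h1]
      have he0 : (0:ℝ) ≤ e j := by
        rw [he]; rcases eq_or_ne j i with rfl | h
        · simp
        · simp [Pi.single_eq_of_ne h]
      have := hw0 j
      nlinarith
    · have h1 : ∑ j, (w + t • d) j = ∑ j, (w j + t * e j - t * w j) :=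
        Finset.sum_congr rfl fun j _ => by
          simp only [Pi.add_apply, Pi.smul_apply, hd, Pi.sub_apply, smul_eq_mul]; ring
      rw [h1, Finset.sum_sub_distrib, Finset.sum_add_distrib, ← Finset.mul_sum,
        ← Finset.mul_sum, hw1, hesum]
      ring
  -- key inequality
  have hX : 0 ≤ d ⬝ᵥ A *ᵥ w := by
    by_contra hneg
    push_neg at hneg
    set X := d ⬝ᵥ A *ᵥ w with hXdef
    set Y := d ⬝ᵥ A *ᵥ d with hYdef
    set t := min 1 (-X / (|Y| + 1)) with ht
    have ht0 : 0 < t := by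
      apply lt_min one_pos
      apply div_pos (by linarith) (by positivity)
    have ht1 : t ≤ 1 := min_le_left _ _
    have hmemt := hmem t (le_of_lt ht0) ht1
    have := hmin hmemt
    simp only [Set.mem_setOf_eq] at this
    rw [expand t] at this
    have htY : t * |Y| ≤ -X := by
      have h2 : t ≤ -X / (|Y| + 1) := min_le_right _ _
      have h3 : (0:ℝ) < |Y| + 1 := by positivity
      calc t * |Y| ≤ (-X / (|Y| + 1)) * |Y| := by
            apply mul_le_mul_of_nonneg_right h2 (abs_nonneg _)
      _ ≤ -X := by
            rw [div_mul_eq_mul_div, div_le_iff₀ h3]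
            nlinarith [abs_nonneg Y]
    have hYle : t^2 * Y ≤ t * (-X) := by
      calc t^2 * Y = t * (t * Y) := by ring
      _ ≤ t * (-X) := by
            apply mul_le_mul_of_nonneg_left _ (le_of_lt ht0)
            calc t * Y ≤ t * |Y| := mul_le_mul_of_nonneg_left (le_abs_self Y) (le_of_lt ht0)
            _ ≤ -X := htY
    nlinarith [mul_pos ht0 (neg_pos.mpr hneg)]
  have hXval : d ⬝ᵥ A *ᵥ w = (A *ᵥ w) i - w ⬝ᵥ A *ᵥ w := by
    rw [hd, sub_dotProduct, he, single_dotProduct, one_mul]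
  linarith [hX, hXval.symm.le]

lemma zmat_aux : ∀ (m : ℕ) (ι : Type) [Fintype ι] [DecidableEq ι], Fintype.card ι ≤ m →
    ∀ (A : Matrix ι ι ℝ), A.PosSemidef → (∀ i j, i ≠ j → A i j ≤ 0) →
    ∃ w : ι → ℝ, (∀ i, 0 < w i) ∧ ∀ i, 0 ≤ (A *ᵥ w) i := by
  intro m
  induction m with
  | zero =>
    intro ι _ _ hcard A _ _
    haveI : IsEmpty ι := Fintype.card_eq_zero_iff.mp (Nat.le_zero.mp hcard)
    exact ⟨fun _ => 1, fun i => isEmptyElim i, fun i => isEmptyElim i⟩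
  | succ m IH =>
    intro ι _ _ hcard A hA hZnn
    classical
    by_cases hne : Nonempty ι
    case neg =>
      haveI : IsEmpty ι := not_nonempty_iff.mp hne
      exact ⟨fun _ => 1, fun i => isEmptyElim i, fun i => isEmptyElim i⟩
    haveI := hne
    have hsymm : ∀ i j, A i j = A j i := by
      intro i j
      rw [← Matrix.IsHermitian.apply hA.1 j i]
      simp
    obtain ⟨w, hw0, hw1, hwmin⟩ := simplex_min A hsymm
    set lam := w ⬝ᵥ A *ᵥ w with hlamdef
    have hlam0 : 0 ≤ lam := hA.dotProduct_mulVec_nonneg w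
    by_cases hpos : ∀ i, 0 < w i
    · exact ⟨w, hpos, fun i => le_trans hlam0 (hwmin i)⟩
    set p : ι → Prop := fun i => w i = 0 with hp
    have hex : ∃ j, ¬ p j := by
      by_contra h
      push_neg at h
      rw [Finset.sum_eq_zero (fun j _ => h j)] at hw1
      norm_num at hw1
    obtain ⟨j0, hj0⟩ := hex
    have hcardZ : Fintype.card {i // p i} ≤ m :=
      Nat.lt_succ_iff.mp (lt_of_lt_of_le (Fintype.card_subtype_lt (x := j0) hj0) hcard)
    set A' : Matrix {i // p i} {i // p i} ℝ := A.submatrix Subtype.val Subtype.val with hA'def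
    have hA' : A'.PosSemidef := hA.submatrix _
    have hZ' : ∀ i j : {i // p i}, i ≠ j → A' i j ≤ 0 := fun i j hij =>
      hZnn i.val j.val (fun h => hij (Subtype.ext h))
    obtain ⟨wZ, hwZ0, hwZ1⟩ := IH {i // p i} hcardZ A' hA' hZ'
    set wz : ι → ℝ := fun i => if h : p i then wZ ⟨i, h⟩ else 0 with hwz
    have hsum : ∀ g : ι → ℝ, ∑ k, g k * wz k = ∑ k : {i // p i}, g k.val * wZ k := by
      intro g
      have h1 : ∑ k, g k * wz k = ∑ k ∈ Finset.univ.filter p, g k * wz k := by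
        symm
        apply Finset.sum_subset (Finset.filter_subset _ _)
        intro k _ hk
        have hk' : ¬ p k := by simpa using hk
        simp [hwz, dif_neg hk']
      rw [h1, Finset.sum_subtype (p := p) _ (fun x => by simp) (fun k => g k * wz k)]
      exact Finset.sum_congr rfl fun k _ => by simp [hwz, dif_pos k.prop]
    have hAwz_in : ∀ j (hj : p j), (A *ᵥ wz) j = (A' *ᵥ wZ) ⟨j, hj⟩ := by
      intro j hj
      simp only [mulVec, dotProduct]
      rw [hsum (fun k => A j k)]
      rfl
    rcases eq_or_lt_of_le hlam0 with hlam | hlam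
    · -- lam = 0 case
      have hAw : A *ᵥ w = 0 := (hA.dotProduct_mulVec_zero_iff w).mp (by simpa using hlam.symm)
      have hzero : ∀ k, p k → ∀ l, ¬ p l → A k l = 0 := by
        intro k hk l hl
        have h0 : ∑ l, A k l * w l = 0 := by
          have := congrFun hAw k
          simpa [mulVec, dotProduct] using this
        have hterm : ∀ l ∈ Finset.univ, A k l * w l ≤ 0 := by
          intro l' _
          rcases eq_or_ne l' k with rfl | hlk
          · have : w l' = 0 := hk
            simp [this]
          · exact mul_nonpos_of_nonpos_of_nonneg (hZnn k l' (Ne.symm hlk)) (hw0 l')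
        have hall := (Finset.sum_eq_zero_iff_of_nonpos hterm).mp h0
        have := hall l (Finset.mem_univ l)
        rcases mul_eq_zero.mp this with h | h
        · exact h
        · exact absurd h hl
      have hAwz_out : ∀ j, ¬ p j → (A *ᵥ wz) j = 0 := by
        intro j hj
        simp only [mulVec, dotProduct]
        apply Finset.sum_eq_zero
        intro k _
        by_cases hk : p k
        · rw [hsymm j k, hzero k hk j hj, zero_mul]
        · simp [hwz, dif_neg hk]
      refine ⟨w + wz, ?_, ?_⟩
      · intro i
        by_cases hi : p i
        · have hwi : w i = 0 := hi
          have : wz i = wZ ⟨i, hi⟩ := dif_pos hi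
          simp only [Pi.add_apply, hwi, zero_add, this]
          exact hwZ0 ⟨i, hi⟩
        · have h1 : 0 < w i := lt_of_le_of_ne (hw0 i) (Ne.symm hi)
          have h2 : wz i = 0 := dif_neg hi
          simp only [Pi.add_apply, h2, add_zero]
          exact h1
      · intro i
        rw [mulVec_add]
        have h2 : (A *ᵥ w) i = 0 := congrFun hAw i
        by_cases hi : p i
        · have h1 := hAwz_in i hi
          simp only [Pi.add_apply, h1, h2, zero_add]
          exact hwZ1 ⟨i, hi⟩
        · simp only [Pi.add_apply, h2, hAwz_out i hi, add_zero, le_refl]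
    · -- 0 < lam case
      set Ssum := ∑ j, |(A *ᵥ wz) j| with hSsum
      have hS0 : 0 ≤ Ssum := Finset.sum_nonneg fun j _ => abs_nonneg _
      set δ := lam / (1 + Ssum) with hδ
      have hδ0 : 0 < δ := div_pos hlam (by linarith)
      refine ⟨w + δ • wz, ?_, ?_⟩
      · intro i
        by_cases hi : p i
        · have hwi : w i = 0 := hi
          have hz : wz i = wZ ⟨i, hi⟩ := dif_pos hi
          simp only [Pi.add_apply, Pi.smul_apply, hwi, zero_add, hz, smul_eq_mul]
          exact mul_pos hδ0 (hwZ0 ⟨i, hi⟩)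
        · have h1 : 0 < w i := lt_of_le_of_ne (hw0 i) (Ne.symm hi)
          have h2 : wz i = 0 := dif_neg hi
          simp only [Pi.add_apply, Pi.smul_apply, h2, smul_eq_mul, mul_zero, add_zero]
          exact h1
      · intro i
        rw [mulVec_add, mulVec_smul]
        have hstep : lam ≤ (A *ᵥ w) i := hwmin i
        have habs : |(A *ᵥ wz) i| ≤ 1 + Ssum := by
          have := Finset.single_le_sum (f := fun j => |(A *ᵥ wz) j|)
            (fun j _ => abs_nonneg _) (Finset.mem_univ i)
          linarith
        have hcan : δ * (1 + Ssum) = lam := div_mul_cancel₀ _ (by linarith)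
        have hlow : -lam ≤ δ * (A *ᵥ wz) i := by
          have hneg : -(|(A *ᵥ wz) i|) ≤ (A *ᵥ wz) i := neg_abs_le _
          nlinarith
        simp only [Pi.add_apply, Pi.smul_apply, smul_eq_mul]
        linarith

lemma key_scaling {n : ℕ} (a c : Fin n → ℝ) (B : Matrix (Fin n) (Fin n) ℝ)
    (ha : ∀ i, 0 ≤ a i) (hB : ∀ i j, 0 ≤ B i j) (hB0 : ∀ i j, a i = 0 → B i j = 0)
    (hq : ∀ x : Fin n → ℝ, ∑ i, (∑ j, B i j * x j)^2 / a i ≤ ∑ j, c j * x j^2) :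
    ∃ s t : Fin n → Fin n → ℝ, (∀ i j, 0 ≤ s i j) ∧ (∀ i j, 0 ≤ t i j) ∧
      (∀ i j, s i j * t i j = B i j) ∧ (∀ i, ∑ j, s i j^2 ≤ a i) ∧
      (∀ j, ∑ i, t i j^2 ≤ c j) := by
  classical
  set K : Matrix (Fin n) (Fin n) ℝ := Matrix.of fun j l => ∑ i, B i j * B i l / a i with hK
  set M : Matrix (Fin n) (Fin n) ℝ :=
    Matrix.of fun j l => (if j = l then c j else 0) - K j l with hM
  have hKsymm : ∀ j l, K j l = K l j := by
    intro j l
    simp only [hK, Matrix.of_apply]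
    exact Finset.sum_congr rfl fun i _ => by ring
  have hMsymm : ∀ j l, M j l = M l j := by
    intro j l
    simp only [hM, Matrix.of_apply]
    rw [hKsymm j l]
    congr 1
    by_cases h : j = l
    · subst h; simp
    · rw [if_neg h, if_neg (Ne.symm h)]
  have hKquad : ∀ x : Fin n → ℝ,
      ∑ j, x j * ∑ l, K j l * x l = ∑ i, (∑ j, B i j * x j)^2 / a i := by
    intro x
    have step1 : ∀ j, x j * ∑ l, K j l * x l
        = ∑ i, (B i j * x j) * ((∑ l, B i l * x l) / a i) := by
      intro j
      rw [Finset.mul_sum]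
      calc ∑ l, x j * (K j l * x l)
          = ∑ l, ∑ i, (B i j * x j) * ((B i l * x l) / a i) := by
            refine Finset.sum_congr rfl fun l _ => ?_
            simp only [hK, Matrix.of_apply]
            rw [Finset.sum_mul, Finset.mul_sum]
            exact Finset.sum_congr rfl fun i _ => by ring
        _ = ∑ i, ∑ l, (B i j * x j) * ((B i l * x l) / a i) := Finset.sum_comm
        _ = ∑ i, (B i j * x j) * ((∑ l, B i l * x l) / a i) := by
            refine Finset.sum_congr rfl fun i _ => ?_
            rw [Finset.sum_div, Finset.mul_sum]
    calc ∑ j, x j * ∑ l, K j l * x l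
        = ∑ j, ∑ i, (B i j * x j) * ((∑ l, B i l * x l) / a i) :=
          Finset.sum_congr rfl fun j _ => step1 j
      _ = ∑ i, ∑ j, (B i j * x j) * ((∑ l, B i l * x l) / a i) := Finset.sum_comm
      _ = ∑ i, (∑ j, B i j * x j) * ((∑ l, B i l * x l) / a i) := by
          refine Finset.sum_congr rfl fun i _ => ?_
          rw [Finset.sum_mul]
      _ = ∑ i, (∑ j, B i j * x j)^2 / a i := by
          refine Finset.sum_congr rfl fun i _ => ?_
          rw [pow_two]; ring
  have hMquad : ∀ x : Fin n → ℝ,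
      x ⬝ᵥ M *ᵥ x = ∑ j, c j * x j^2 - ∑ i, (∑ j, B i j * x j)^2 / a i := by
    intro x
    rw [← hKquad x]
    simp only [dotProduct, mulVec, hM, Matrix.of_apply]
    rw [← Finset.sum_sub_distrib]
    refine Finset.sum_congr rfl fun j _ => ?_
    rw [Finset.mul_sum]
    have e1 : ∀ l, x j * (((if j = l then c j else 0) - K j l) * x l)
        = (if j = l then c j * (x j * x l) else 0) - x j * (K j l * x l) := by
      intro l; split_ifs <;> ring
    rw [Finset.sum_congr rfl fun l _ => e1 l, Finset.sum_sub_distrib,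
      Finset.sum_ite_eq Finset.univ j (fun l => c j * (x j * x l))]
    simp only [Finset.mem_univ, if_true]
    rw [Finset.mul_sum]
    ring
  have hMpsd : M.PosSemidef := by
    refine Matrix.PosSemidef.of_dotProduct_mulVec_nonneg ?_ ?_
    · ext j l
      simp only [conjTranspose_apply, star_trivial]
      exact hMsymm l j
    · intro x
      have hx : star x = x := funext fun i => star_trivial (x i)
      rw [hx, hMquad x]
      have := hq x
      simp only [sub_nonneg]
      exact this
  have hMZ : ∀ j l, j ≠ l → M j l ≤ 0 := by
    intro j l hjl
    simp only [hM, Matrix.of_apply, if_neg hjl, zero_sub, neg_nonpos, hK]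
    exact Finset.sum_nonneg fun i _ =>
      div_nonneg (mul_nonneg (hB i j) (hB i l)) (ha i)
  obtain ⟨w, hw0, hMw⟩ := zmat_aux (Fintype.card (Fin n)) (Fin n) le_rfl M hMpsd hMZ
  set bw : Fin n → ℝ := fun i => ∑ k, B i k * w k with hbw
  have hbw0 : ∀ i, 0 ≤ bw i :=
    fun i => Finset.sum_nonneg fun k _ => mul_nonneg (hB i k) (le_of_lt (hw0 k))
  have hbwz : ∀ i, bw i = 0 → ∀ j, B i j = 0 := by
    intro i hi j
    have h1 := (Finset.sum_eq_zero_iff_of_nonneg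
      (fun k (_ : k ∈ Finset.univ) => mul_nonneg (hB i k) (le_of_lt (hw0 k)))).mp hi
    have := h1 j (Finset.mem_univ j)
    rcases mul_eq_zero.mp this with h | h
    · exact h
    · exact absurd h (ne_of_gt (hw0 j))
  -- the Kw bound
  have hKw : ∀ j, ∑ i, B i j * bw i / a i ≤ c j * w j := by
    intro j
    have h1 := hMw j
    have h2 : (M *ᵥ w) j = c j * w j - ∑ l, K j l * w l := by
      simp only [mulVec, dotProduct, hM, Matrix.of_apply]
      rw [Finset.sum_congr rfl (fun l (_ : l ∈ Finset.univ) => by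
        show ((if j = l then c j else 0) - K j l) * w l
          = (if j = l then c j * w l else 0) - K j l * w l
        split_ifs <;> ring), Finset.sum_sub_distrib,
        Finset.sum_ite_eq Finset.univ j (fun l => c j * w l)]
      simp only [Finset.mem_univ, if_true]
    have h3 : ∑ l, K j l * w l = ∑ i, B i j * bw i / a i := by
      calc ∑ l, K j l * w l
          = ∑ l, ∑ i, (B i j * B i l / a i) * w l := by
            refine Finset.sum_congr rfl fun l _ => ?_
            simp only [hK, Matrix.of_apply]
            rw [Finset.sum_mul]
        _ = ∑ i, ∑ l, (B i j * B i l / a i) * w l := Finset.sum_comm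
        _ = ∑ i, B i j * bw i / a i := by
            refine Finset.sum_congr rfl fun i _ => ?_
            have e2 : ∑ l, (B i j * B i l / a i) * w l
                = ∑ l, B i j * (B i l * w l) / a i :=
              Finset.sum_congr rfl fun l _ => by ring
            rw [e2, ← Finset.sum_div, ← Finset.mul_sum]
    rw [h2, h3] at h1
    linarith
  refine ⟨fun i j => Real.sqrt (B i j * a i * w j / bw i),
    fun i j => Real.sqrt (B i j * bw i / (a i * w j)),
    fun i j => Real.sqrt_nonneg _, fun i j => Real.sqrt_nonneg _, ?_, ?_, ?_⟩
  · -- product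
    intro i j
    by_cases hBij : B i j = 0
    · simp [hBij]
    · have hai : 0 < a i := by
        rcases (ha i).lt_or_eq with h | h
        · exact h
        · exact absurd (hB0 i j h.symm) hBij
      have hbwi : 0 < bw i := by
        rcases (hbw0 i).lt_or_eq with h | h
        · exact h
        · exact absurd (hbwz i h.symm j) hBij
      have harg0 : 0 ≤ B i j * a i * w j / bw i :=
        div_nonneg (mul_nonneg (mul_nonneg (hB i j) (ha i)) (hw0 j).le) (hbw0 i)
      rw [← Real.sqrt_mul harg0]
      have harg : B i j * a i * w j / bw i * (B i j * bw i / (a i * w j)) = (B i j)^2 := by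
        rw [div_mul_div_comm, div_eq_iff (mul_pos hbwi (mul_pos hai (hw0 j))).ne']
        ring
      rw [harg, Real.sqrt_sq (hB i j)]
  · -- row sums
    intro i
    have hsq : ∀ j, (Real.sqrt (B i j * a i * w j / bw i))^2 = B i j * a i * w j / bw i :=
      fun j => Real.sq_sqrt
        (div_nonneg (mul_nonneg (mul_nonneg (hB i j) (ha i)) (hw0 j).le) (hbw0 i))
    rw [Finset.sum_congr rfl fun j _ => hsq j]
    by_cases hbwi : bw i = 0
    · have : ∀ j, B i j * a i * w j / bw i = 0 := fun j => by
        rw [hbwz i hbwi j]; simp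
      rw [Finset.sum_congr rfl fun j _ => this j]
      simpa using ha i
    · have : ∑ j, B i j * a i * w j / bw i = (a i / bw i) * ∑ j, B i j * w j := by
        rw [Finset.mul_sum]
        exact Finset.sum_congr rfl fun j _ => by ring
      have e3 : ∑ j, B i j * w j = bw i := rfl
      rw [this, e3]
      exact le_of_eq (div_mul_cancel₀ _ hbwi)
  · -- column sums
    intro j
    have hsq : ∀ i, (Real.sqrt (B i j * bw i / (a i * w j)))^2 = B i j * bw i / (a i * w j) :=
      fun i => Real.sq_sqrt
        (div_nonneg (mul_nonneg (hB i j) (hbw0 i)) (mul_nonneg (ha i) (hw0 j).le))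
    rw [Finset.sum_congr rfl fun i _ => hsq i]
    have : ∑ i, B i j * bw i / (a i * w j) = (∑ i, B i j * bw i / a i) / w j := by
      rw [Finset.sum_div]
      exact Finset.sum_congr rfl fun i _ => (div_div _ _ _).symm
    rw [this, div_le_iff₀ (hw0 j)]
    exact hKw j

lemma isCP_of_family {ι : Type*} [Fintype ι] {κ : Type*} [Fintype κ]
    (A : Matrix ι ι ℝ) (x : κ → ι → ℝ) (hx : ∀ t i, 0 ≤ x t i)
    (hA : A = ∑ t, Matrix.vecMulVec (x t) (x t)) : IsCPMatrix A := by
  refine ⟨Fintype.card κ, fun t => x ((Fintype.equivFin κ).symm t),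
    fun t i => hx _ i, ?_⟩
  rw [hA, ← Equiv.sum_comp (Fintype.equivFin κ).symm
    (fun t => Matrix.vecMulVec (x t) (x t))]

/-- Matrix form of the main result: a doubly nonnegative `2n × 2n` matrix `J`,
viewed with `2×2` blocks `J_{ij}` (indexed by pairs `(i,p)` with `i ∈ Fin n`,
`p ∈ Fin 2`), whose blocks satisfy `tr(J_{ij}) = δ_{ij}`, is completely positive. -/
theorem stmt2 (n : ℕ) (J : Matrix (Fin n × Fin 2) (Fin n × Fin 2) ℝ)
    (hPSD : J.PosSemidef) (hNN : ∀ u v, 0 ≤ J u v)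
    (hTr : ∀ i j : Fin n,
      J (i, 0) (j, 0) + J (i, 1) (j, 1) = if i = j then 1 else 0) :
    IsCPMatrix J := by
  classical
  have hne01 : ((0 : Fin 2) ≠ 1) := by decide
  have hsymmJ : ∀ u v, J u v = J v u := by
    intro u v
    rw [← Matrix.IsHermitian.apply hPSD.1 v u]
    simp
  have hoff : ∀ i j : Fin n, i ≠ j → J (i,0) (j,0) = 0 ∧ J (i,1) (j,1) = 0 := by
    intro i j hij
    have h := hTr i j
    rw [if_neg hij] at h
    have h1 := hNN (i, (0:Fin 2)) (j, 0)
    have h2 := hNN (i, (1:Fin 2)) (j, 1)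
    constructor <;> linarith
  have hB0 : ∀ i j : Fin n, J (i,0) (i,0) = 0 → J (i,0) (j,1) = 0 := by
    intro i j hai
    set e : (Fin n × Fin 2) → ℝ := Pi.single ((i,0) : Fin n × Fin 2) (1:ℝ) with he
    have hstar : star e = e := by
      ext v; rw [he]; simp
    have h1 : star e ⬝ᵥ J *ᵥ e = 0 := by
      rw [hstar, he, mulVec_single, single_dotProduct]
      simpa using hai
    have h2 := (hPSD.dotProduct_mulVec_zero_iff _).mp h1
    have h3 := congrFun h2 ((j,1) : Fin n × Fin 2)
    rw [he, mulVec_single] at h3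
    simp only [MulOpposite.op_one, one_smul, Matrix.col_apply] at h3
    rw [hsymmJ]
    exact h3
  -- quadratic form hypothesis
  have hq : ∀ x : Fin n → ℝ,
      ∑ i, (∑ j, J (i,0) (j,1) * x j)^2 / J (i,0) (i,0) ≤ ∑ j, J (j,1) (j,1) * x j^2 := by
    intro x
    set bx : Fin n → ℝ := fun i => ∑ j, J (i,0) (j,1) * x j with hbx
    set y : Fin n × Fin 2 → ℝ :=
      fun v => if v.2 = 0 then -(bx v.1 / J (v.1,0) (v.1,0)) else x v.1 with hy
    have hy0 : ∀ i, y (i,0) = -(bx i / J (i,0) (i,0)) := by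
      intro i; simp [hy]
    have hy1 : ∀ i, y (i,1) = x i := by
      intro i; simp [hy]
    have hystar : star y = y := by ext v; simp
    have h0 := hPSD.dotProduct_mulVec_nonneg y
    rw [hystar] at h0
    have hsplit : y ⬝ᵥ J *ᵥ y
        = ∑ i, (y (i,0) * ((J *ᵥ y) (i,0))) + ∑ i, (y (i,1) * ((J *ᵥ y) (i,1))) := by
      simp only [dotProduct]
      rw [Fintype.sum_prod_type, ← Finset.sum_add_distrib]
      exact Finset.sum_congr rfl fun i _ =>
        Fin.sum_univ_two (fun p => y (i,p) * (J *ᵥ y) (i,p))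
    have hJy0 : ∀ i, (J *ᵥ y) (i,0) = J (i,0) (i,0) * y (i,0) + bx i := by
      intro i
      simp only [mulVec, dotProduct]
      rw [Fintype.sum_prod_type,
        Finset.sum_congr rfl fun k (_ : k ∈ Finset.univ) =>
          Fin.sum_univ_two (fun p => J (i,0) (k,p) * y (k,p)),
        Finset.sum_add_distrib]
      congr 1
      · rw [Finset.sum_eq_single i]
        · intro k _ hk
          rw [(hoff i k (Ne.symm hk)).1, zero_mul]
        · intro h; exact absurd (Finset.mem_univ i) h
    have hJy1 : ∀ i, (J *ᵥ y) (i,1)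
        = (∑ k, J (k,0) (i,1) * y (k,0)) + J (i,1) (i,1) * x i := by
      intro i
      simp only [mulVec, dotProduct]
      rw [Fintype.sum_prod_type,
        Finset.sum_congr rfl fun k (_ : k ∈ Finset.univ) =>
          Fin.sum_univ_two (fun p => J (i,1) (k,p) * y (k,p)),
        Finset.sum_add_distrib]
      congr 1
      · exact Finset.sum_congr rfl fun k _ => by rw [hsymmJ (i,1) (k,0)]
      · rw [Finset.sum_eq_single i]
        · rw [hy1 i]
        · intro k _ hk
          rw [(hoff i k (Ne.symm hk)).2, zero_mul]
        · intro h; exact absurd (Finset.mem_univ i) h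
    have e0 : ∑ i, y (i,0) * ((J *ᵥ y) (i,0))
        = ∑ i, (J (i,0) (i,0) * (y (i,0))^2 + y (i,0) * bx i) :=
      Finset.sum_congr rfl fun i _ => by rw [hJy0 i]; ring
    have e1 : ∑ i, y (i,1) * ((J *ᵥ y) (i,1))
        = ∑ i, y (i,0) * bx i + ∑ i, J (i,1) (i,1) * x i^2 := by
      have e2 : ∀ i, y (i,1) * ((J *ᵥ y) (i,1))
          = (∑ k, (J (k,0) (i,1) * y (k,0)) * x i) + J (i,1) (i,1) * x i^2 := by
        intro i
        rw [hJy1 i, hy1 i, mul_add, Finset.mul_sum]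
        congr 1
        · exact Finset.sum_congr rfl fun k _ => by ring
        · ring
      rw [Finset.sum_congr rfl fun i _ => e2 i, Finset.sum_add_distrib]
      congr 1
      rw [Finset.sum_comm]
      refine Finset.sum_congr rfl fun k _ => ?_
      have e3 : ∀ i, (J (k,0) (i,1) * y (k,0)) * x i
          = y (k,0) * (J (k,0) (i,1) * x i) := fun i => by ring
      rw [Finset.sum_congr rfl fun i _ => e3 i, ← Finset.mul_sum]
    have hcalc : y ⬝ᵥ J *ᵥ y
        = ∑ i, (J (i,0) (i,0) * (y (i,0))^2 + 2 * (y (i,0) * bx i))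
          + ∑ i, J (i,1) (i,1) * x i^2 := by
      rw [hsplit, e0, e1, ← add_assoc, ← Finset.sum_add_distrib]
      congr 1
      exact Finset.sum_congr rfl fun i _ => by ring
    have hbx0 : ∀ i, J (i,0) (i,0) = 0 → bx i = 0 := by
      intro i h
      rw [hbx]
      exact Finset.sum_eq_zero fun j _ => by rw [hB0 i j h, zero_mul]
    have hterm : ∀ i, J (i,0) (i,0) * (y (i,0))^2 + 2 * (y (i,0) * bx i)
        = -(bx i^2 / J (i,0) (i,0)) := by
      intro i
      rw [hy0 i]
      rcases eq_or_ne (J (i,0) (i,0)) 0 with h | h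
      · rw [h, hbx0 i h]
        simp
      · field_simp
        ring
    rw [hcalc, Finset.sum_congr rfl fun i _ => hterm i] at h0
    have hsneg : ∑ i, -(bx i^2 / J (i,0) (i,0)) = -∑ i, bx i^2 / J (i,0) (i,0) :=
      Finset.sum_neg_distrib _
    rw [hsneg] at h0
    linarith
  obtain ⟨s, t, hs0, ht0, hst, hsrow, htcol⟩ := key_scaling
    (fun i => J (i,0) (i,0)) (fun i => J (i,1) (i,1))
    (Matrix.of fun i j => J (i,0) (j,1))
    (fun i => hNN _ _) (fun i j => hNN _ _) hB0 hq
  set slack0 : Fin n → ℝ := fun i => Real.sqrt (J (i,0) (i,0) - ∑ j, s i j^2) with hsl0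
  set slack1 : Fin n → ℝ := fun i => Real.sqrt (J (i,1) (i,1) - ∑ k, t k i^2) with hsl1
  set G : Fin n × Fin 2 → ℝ := fun m => if m.2 = 0 then slack0 m.1 else slack1 m.1 with hG
  set F : (Fin n × Fin n) ⊕ (Fin n × Fin 2) → (Fin n × Fin 2) → ℝ :=
    Sum.elim
      (fun q v => if v = (q.1, 0) then s q.1 q.2 else if v = (q.2, 1) then t q.1 q.2 else 0)
      (fun m v => if v = m then G m else 0) with hF
  apply isCP_of_family J F
  · rintro (⟨i,j⟩ | ⟨i,p⟩) v
    · simp only [hF, Sum.elim_inl]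
      split_ifs
      · exact hs0 i j
      · exact ht0 i j
      · exact le_refl 0
    · simp only [hF, Sum.elim_inr]
      split_ifs
      · simp only [hG]
        split_ifs <;> exact Real.sqrt_nonneg _
      · exact le_refl 0
  · ext u v
    obtain ⟨i, p⟩ := u
    obtain ⟨j, q⟩ := v
    rw [Matrix.sum_apply]
    have hterm : ∀ u, Matrix.vecMulVec (F u) (F u) (i,p) (j,q) = F u (i,p) * F u (j,q) :=
      fun u => rfl
    rw [Finset.sum_congr rfl fun u _ => hterm u, Fintype.sum_sum_type]
    have h01F : ((0:Fin 2) = 1) ↔ False := iff_false_intro hne01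
    have h10F : ((1:Fin 2) = 0) ↔ False := iff_false_intro (Ne.symm hne01)
    have hslack : ∑ m : Fin n × Fin 2, F (Sum.inr m) (i,p) * F (Sum.inr m) (j,q)
        = if ((i,p) : Fin n × Fin 2) = (j,q) then G (i,p) * G (i,p) else 0 := by
      simp only [hF, Sum.elim_inr]
      rcases eq_or_ne ((i,p) : Fin n × Fin 2) ((j,q) : Fin n × Fin 2) with heq | hne
      · rw [if_pos heq, ← heq]
        have e : ∀ m : Fin n × Fin 2, (if ((i,p) : Fin n × Fin 2) = m then G m else 0) *
            (if ((i,p) : Fin n × Fin 2) = m then G m else 0)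
            = if ((i,p) : Fin n × Fin 2) = m then G m * G m else 0 := by
          intro m; split_ifs <;> simp
        rw [Finset.sum_congr rfl fun m _ => e m,
          Finset.sum_ite_eq Finset.univ ((i,p) : Fin n × Fin 2) (fun m => G m * G m)]
        simp
      · rw [if_neg hne]
        apply Finset.sum_eq_zero
        intro m _
        rcases eq_or_ne ((i,p) : Fin n × Fin 2) m with h1 | h1
        · have h2 : ¬(((j,q) : Fin n × Fin 2) = m) := fun hh => hne (by rw [h1, ← hh])
          rw [if_neg h2, mul_zero]
        · rw [if_neg h1, zero_mul]
    rw [hslack, Fintype.sum_prod_type]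
    simp only [hF, Sum.elim_inl]
    fin_cases p <;> fin_cases q
    · -- p = 0, q = 0
      simp only [Fin.mk_zero, Fin.mk_one, Prod.mk.injEq, and_true, and_false, true_and,
        false_and, h01F, h10F, if_false]
      have hGv : G (i, (0:Fin 2)) = slack0 i := by simp [hG]
      rcases eq_or_ne i j with rfl | hij
      · rw [if_pos rfl, hGv]
        have h1 : ∀ x, ∑ y, (if i = x then s x y else 0) * (if i = x then s x y else 0)
            = if i = x then ∑ y, s x y ^ 2 else 0 := by
          intro x
          by_cases h : i = x
          · simp only [if_pos h]
            exact Finset.sum_congr rfl fun y _ => (pow_two _).symm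
          · simp only [if_neg h, zero_mul, Finset.sum_const_zero]
        rw [Finset.sum_congr rfl fun x _ => h1 x, Finset.sum_ite_eq]
        simp only [Finset.mem_univ, if_true]
        simp only [hsl0]
        rw [Real.mul_self_sqrt (sub_nonneg.mpr (hsrow i))]
        ring
      · rw [if_neg hij, add_zero, (hoff i j hij).1]
        symm
        apply Finset.sum_eq_zero; intro x _
        apply Finset.sum_eq_zero; intro y _
        rcases eq_or_ne i x with rfl | hix
        · rw [if_neg (fun h : j = i => hij h.symm), mul_zero]
        · rw [if_neg hix, zero_mul]
    · -- p = 0, q = 1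
      simp only [Fin.mk_zero, Fin.mk_one, Prod.mk.injEq, and_true, and_false, true_and,
        false_and, h01F, h10F, if_false, add_zero]
      have h1 : ∀ x, ∑ y, (if i = x then s x y else 0) * (if j = y then t x y else 0)
          = if i = x then s x j * t x j else 0 := by
        intro x
        by_cases h : i = x
        · simp only [if_pos h]
          have e : ∀ y, s x y * (if j = y then t x y else 0)
              = if j = y then s x y * t x y else 0 := by
            intro y; split_ifs <;> ring
          rw [Finset.sum_congr rfl fun y _ => e y, Finset.sum_ite_eq]
          simp
        · simp only [if_neg h, zero_mul, Finset.sum_const_zero]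
      rw [Finset.sum_congr rfl fun x _ => h1 x, Finset.sum_ite_eq]
      simp only [Finset.mem_univ, if_true]
      exact (hst i j).symm
    · -- p = 1, q = 0
      simp only [Fin.mk_zero, Fin.mk_one, Prod.mk.injEq, and_true, and_false, true_and,
        false_and, h01F, h10F, if_false, add_zero]
      have h1 : ∀ x, ∑ y, (if i = y then t x y else 0) * (if j = x then s x y else 0)
          = if j = x then s x i * t x i else 0 := by
        intro x
        by_cases h : j = x
        · simp only [if_pos h]
          have e : ∀ y, (if i = y then t x y else 0) * s x y
              = if i = y then s x y * t x y else 0 := by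
            intro y; split_ifs <;> ring
          rw [Finset.sum_congr rfl fun y _ => e y, Finset.sum_ite_eq]
          simp
        · simp only [if_neg h, mul_zero, Finset.sum_const_zero]
      rw [Finset.sum_congr rfl fun x _ => h1 x, Finset.sum_ite_eq]
      simp only [Finset.mem_univ, if_true]
      rw [hsymmJ (i,1) (j,0)]
      exact (hst j i).symm
    · -- p = 1, q = 1
      simp only [Fin.mk_zero, Fin.mk_one, Prod.mk.injEq, and_true, and_false, true_and,
        false_and, h01F, h10F, if_false]
      have hGv : G (i, (1:Fin 2)) = slack1 i := by simp [hG, h10F]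
      rcases eq_or_ne i j with rfl | hij
      · rw [if_pos rfl, hGv]
        have h1 : ∀ x, ∑ y, (if i = y then t x y else 0) * (if i = y then t x y else 0)
            = t x i ^ 2 := by
          intro x
          have e : ∀ y, (if i = y then t x y else 0) * (if i = y then t x y else 0)
              = if i = y then t x y ^ 2 else 0 := by
            intro y; split_ifs <;> ring
          rw [Finset.sum_congr rfl fun y _ => e y, Finset.sum_ite_eq]
          simp
        rw [Finset.sum_congr rfl fun x _ => h1 x]
        simp only [hsl1]
        rw [Real.mul_self_sqrt (sub_nonneg.mpr (htcol i))]
        ring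
      · rw [if_neg hij, add_zero, (hoff i j hij).2]
        symm
        apply Finset.sum_eq_zero; intro x _
        apply Finset.sum_eq_zero; intro y _
        rcases eq_or_ne i y with rfl | hiy
        · rw [if_neg (fun h : j = i => hij h.symm), mul_zero]
        · rw [if_neg hiy, zero_mul]
end

section
/- Let n ∈ ℕ and let A ∈ M_{2n}(ℝ) be a doubly nonnegative matrix (positive semidefinite and entrywise nonnegative) of block form A = [[D₀, B],[Bᵀ, D₁]] with D₀, D₁ diagonal n×n matrices and B an n×n matrix. Then A is completely positive, i.e., A = Σ_{t=1}^s x_t x_tᵀ for some entrywise nonnegative vectors x_t ∈ ℝ^{2n}. -/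
open Matrix

lemma firstOrderAux {L C δ : ℝ} (hδ : 0 < δ)
    (h : ∀ ε : ℝ, 0 < ε → ε ≤ δ → 0 ≤ 2*ε*L + ε^2*C) : 0 ≤ L := by
  by_contra hL
  push_neg at hL
  rcases le_or_gt C 0 with hC | hC
  · have h1 := h δ hδ le_rfl
    nlinarith
  · have hε0 : 0 < min δ (-L/C) := lt_min hδ (div_pos (neg_pos.2 hL) hC)
    have h1 := h _ hε0 (min_le_left _ _)
    have h3 : min δ (-L/C) * C ≤ -L := (le_div_iff₀ hC).mp (min_le_right _ _)
    nlinarith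

lemma isCP_sum {ι : Type*} [Fintype ι] {σ : Type*} [Fintype σ]
    (x : σ → ι → ℝ) (hx : ∀ t i, 0 ≤ x t i) :
    IsCPMatrix (∑ t, Matrix.vecMulVec (x t) (x t)) := by
  refine ⟨Fintype.card σ, fun t => x ((Fintype.equivFin σ).symm t), fun t i => hx _ _, ?_⟩
  exact ((Fintype.equivFin σ).symm.sum_comp fun t => Matrix.vecMulVec (x t) (x t)).symm

lemma isCP_of_isEmpty {ι : Type*} [Fintype ι] [IsEmpty ι] (A : Matrix ι ι ℝ) : IsCPMatrix A :=
  ⟨0, fun t => t.elim0, fun t => t.elim0, Matrix.ext fun u => isEmptyElim u⟩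

theorem keyCP : ∀ (m : ℕ) (ι : Type) [Fintype ι] (side : ι → Bool) (A : Matrix ι ι ℝ),
    Fintype.card ι ≤ m → A.PosSemidef → (∀ u w, 0 ≤ A u w) →
    (∀ u w : ι, u ≠ w → side u = side w → A u w = 0) → IsCPMatrix A := by
  intro m
  induction m with
  | zero =>
    intro ι _ side A hcard _ _ _
    have : IsEmpty ι := Fintype.card_eq_zero_iff.mp (Nat.le_zero.mp hcard)
    exact isCP_of_isEmpty A
  | succ m ih =>
    intro ι _ side A hcard hPSD hA0 hsame
    classical
    by_cases hne : Nonempty ι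
    case neg =>
      have : IsEmpty ι := not_nonempty_iff.mp hne
      exact isCP_of_isEmpty A
    case pos =>
    have hsymm : ∀ u w, A w u = A u w := by
      intro u w
      have := congrFun (congrFun hPSD.1 u) w
      simpa using this
    have hq : ∀ x : ι → ℝ, 0 ≤ ∑ u, x u * ∑ w, A u w * x w := by
      intro x
      have := hPSD.dotProduct_mulVec_nonneg x
      simpa [dotProduct, mulVec] using this
    set sgn : ι → ℝ := fun u => if side u then 1 else -1 with hsgn_def
    set N : Matrix ι ι ℝ := Matrix.of fun u w => sgn u * sgn w * A u w with hN_def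
    have hNapp : ∀ u w, N u w = sgn u * sgn w * A u w := fun u w => rfl
    have hNsymm : ∀ u w, N u w = N w u := by
      intro u w; rw [hNapp, hNapp, hsymm u w]; ring
    set Q : (ι → ℝ) → ℝ := fun z => ∑ u, z u * ∑ w, N u w * z w with hQ_def
    have hQapp : ∀ z, Q z = ∑ u, z u * ∑ w, N u w * z w := fun z => rfl
    have hQpos : ∀ z, 0 ≤ Q z := by
      intro z
      have h1 := hq (fun u => sgn u * z u)
      have h2 : (∑ u, (sgn u * z u) * ∑ w, A u w * (sgn w * z w)) = Q z := by
        rw [hQapp]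
        refine Finset.sum_congr rfl fun u _ => ?_
        rw [Finset.mul_sum, Finset.mul_sum]
        refine Finset.sum_congr rfl fun w _ => ?_
        rw [hNapp]
        have hs : sgn u * sgn u = 1 := by
          by_cases h : side u <;> simp [hsgn_def, h]
        ring
      rwa [h2] at h1
    have hQcont : Continuous Q := by
      rw [hQ_def]
      exact continuous_finset_sum _ fun u _ => (continuous_apply u).mul
        (continuous_finset_sum _ fun w _ => continuous_const.mul (continuous_apply w))
    have hcne : (Fintype.card ι : ℝ) ≠ 0 := Nat.cast_ne_zero.mpr Fintype.card_ne_zero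
    obtain ⟨v, hvmem, hvmin⟩ := (isCompact_stdSimplex ℝ ι).exists_isMinOn
      ⟨fun _ => (Fintype.card ι : ℝ)⁻¹,
        fun u => by positivity,
        by simp [Finset.sum_const, Finset.card_univ, nsmul_eq_mul]⟩
      hQcont.continuousOn
    obtain ⟨hv0, hvsum⟩ := hvmem
    set R : ι → ℝ := fun u => ∑ w, N u w * v w with hR_def
    have hQv_eq : ∀ z : ι → ℝ, Q z = ∑ u, ∑ w, N u w * z u * z w := by
      intro z
      rw [hQapp]
      refine Finset.sum_congr rfl fun u _ => ?_
      rw [Finset.mul_sum]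
      exact Finset.sum_congr rfl fun w _ => by ring
    have hL_eq : ∀ dd : ι → ℝ, (∑ u, dd u * R u) = ∑ u, ∑ w, N u w * dd u * v w := by
      intro dd
      refine Finset.sum_congr rfl fun u _ => ?_
      rw [hR_def, Finset.mul_sum]
      exact Finset.sum_congr rfl fun w _ => by ring
    have hexp : ∀ (d : ι → ℝ) (ε : ℝ),
        Q (fun r => v r + ε * d r) = Q v + 2*ε*(∑ u, d u * R u) + ε^2 * Q d := by
      intro d ε
      have hsw : (∑ u, ∑ w, N u w * v u * d w) = ∑ u, ∑ w, N u w * d u * v w := by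
        rw [Finset.sum_comm]
        refine Finset.sum_congr rfl fun u _ => Finset.sum_congr rfl fun w _ => ?_
        rw [hNsymm w u]; ring
      have step1 : Q (fun r => v r + ε * d r)
          = ∑ u, ∑ w, (N u w * v u * v w + ε * (N u w * d u * v w)
              + ε * (N u w * v u * d w) + ε^2 * (N u w * d u * d w)) := by
        rw [hQapp]
        refine Finset.sum_congr rfl fun u _ => ?_
        rw [Finset.mul_sum]
        exact Finset.sum_congr rfl fun w _ => by ring
      rw [step1]
      simp only [Finset.sum_add_distrib, ← Finset.mul_sum]
      rw [hsw, hQv_eq v, hQv_eq d, hL_eq d]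
      ring
    have hfo : ∀ u w : ι, 0 < v w → R w ≤ R u := by
      intro u w hw
      rcases eq_or_ne u w with rfl | huw
      · exact le_rfl
      set d : ι → ℝ := fun r => (if r = u then (1:ℝ) else 0) - (if r = w then 1 else 0)
        with hd_def
      have hdL : (∑ x, d x * R x) = R u - R w := by
        simp only [hd_def, sub_mul, ite_mul, one_mul, zero_mul]
        rw [Finset.sum_sub_distrib, Finset.sum_ite_eq' Finset.univ u R,
          Finset.sum_ite_eq' Finset.univ w R]
        simp
      have key0 : 0 ≤ ∑ x, d x * R x := by
        apply firstOrderAux (δ := v w) hw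
        intro ε hε hεle
        have hmem : (fun r => v r + ε * d r) ∈ stdSimplex ℝ ι := by
          constructor
          · intro i
            show 0 ≤ v i + ε * d i
            by_cases hr : i = u
            · have hd1 : d i = 1 := by simp [hd_def, hr, huw]
              rw [hd1]
              have := hv0 i
              nlinarith
            · by_cases hr' : i = w
              · have hd1 : d i = -1 := by
                  have hwu : ¬(w = u) := fun h => huw h.symm
                  simp [hd_def, hr, hr', hwu]
                rw [hd1]
                subst hr'
                linarith
              · have hd1 : d i = 0 := by simp [hd_def, hr, hr']
                rw [hd1]
                simpa using hv0 i
          · have hdsum : ∑ r, d r = 0 := by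
              simp only [hd_def]
              rw [Finset.sum_sub_distrib, Finset.sum_ite_eq' Finset.univ u (fun _ => (1:ℝ)),
                Finset.sum_ite_eq' Finset.univ w (fun _ => (1:ℝ))]
              simp
            show (∑ i, (v i + ε * d i)) = 1
            rw [Finset.sum_add_distrib, ← Finset.mul_sum, hdsum, hvsum]
            ring
        have hmin := isMinOn_iff.mp hvmin _ hmem
        rw [hexp d ε] at hmin
        linarith
      rw [hdL] at key0
      linarith
    have hRnn : ∀ u, 0 ≤ R u := by
      intro u
      have h1 : Q v = ∑ w, v w * R w := rfl
      have h2 : ∑ w, v w * R w ≤ ∑ w, v w * R u := by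
        refine Finset.sum_le_sum fun w _ => ?_
        rcases eq_or_lt_of_le (hv0 w) with h | h
        · rw [← h]; simp
        · exact mul_le_mul_of_nonneg_left (hfo u w h) (hv0 w)
      have h3 : ∑ w, v w * R u = R u := by rw [← Finset.sum_mul, hvsum, one_mul]
      have h0 := hQpos v
      rw [h1] at h0
      linarith
    have hDom : ∀ u, (∑ w, if side w ≠ side u then A u w * v w else 0) ≤ A u u * v u := by
      intro u
      have hterm : ∀ w ∈ Finset.univ, N u w * v w
          = (if w = u then A u u * v u else 0)
            + (if side w ≠ side u then -(A u w * v w) else 0) := by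
        intro w _
        by_cases hw : w = u
        · subst hw
          rw [hNapp, if_pos rfl, if_neg (by simp)]
          have hs : sgn w * sgn w = 1 := by
            by_cases h : side w <;> simp [hsgn_def, h]
          linear_combination (A w w * v w) * hs
        · by_cases hss : side w = side u
          · have hA := hsame u w (fun h => hw h.symm) hss.symm
            simp [hNapp, hA, hw, hss]
          · rw [hNapp, if_neg hw, if_pos hss, zero_add]
            have hsgn2 : sgn u * sgn w = -1 := by
              cases hsu : side u <;> cases hsw : side w
              · exact absurd (hsw.trans hsu.symm) hss
              · simp [hsgn_def, hsu, hsw]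
              · simp [hsgn_def, hsu, hsw]
              · exact absurd (hsw.trans hsu.symm) hss
            linear_combination (A u w * v w) * hsgn2
      have hRu : R u = A u u * v u - ∑ w, (if side w ≠ side u then A u w * v w else 0) := by
        rw [hR_def]
        calc (∑ w, N u w * v w)
            = ∑ w, ((if w = u then A u u * v u else 0)
              + (if side w ≠ side u then -(A u w * v w) else 0)) :=
              Finset.sum_congr rfl hterm
          _ = (∑ w, if w = u then A u u * v u else 0)
              + ∑ w, (if side w ≠ side u then -(A u w * v w) else 0) :=
              Finset.sum_add_distrib
          _ = A u u * v u - ∑ w, (if side w ≠ side u then A u w * v w else 0) := by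
              rw [Finset.sum_ite_eq' Finset.univ u (fun _ => A u u * v u)]
              have hneg : ∀ w ∈ Finset.univ,
                  (if side w ≠ side u then -(A u w * v w) else 0)
                  = -(if side w ≠ side u then (A u w * v w) else 0) := by
                intro w _; split <;> simp
              rw [Finset.sum_congr rfl hneg]
              simp [sub_eq_add_neg]
      have := hRnn u
      linarith
    have hprop : ∀ u w, v u = 0 → side w ≠ side u → A u w * v w = 0 := by
      intro u w hu hsw
      have hnn : ∀ w' ∈ Finset.univ, 0 ≤ (if side w' ≠ side u then A u w' * v w' else 0) := by
        intro w' _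
        split
        · exact mul_nonneg (hA0 u w') (hv0 w')
        · exact le_rfl
      have h1 : (∑ w', if side w' ≠ side u then A u w' * v w' else 0) ≤ 0 := by
        have := hDom u; rw [hu, mul_zero] at this; exact this
      have h2 : (∑ w', if side w' ≠ side u then A u w' * v w' else 0) = 0 :=
        le_antisymm h1 (Finset.sum_nonneg hnn)
      have h3 := (Finset.sum_eq_zero_iff_of_nonneg hnn).mp h2 w (Finset.mem_univ w)
      rwa [if_pos hsw] at h3
    set S : ι → ℝ := fun u => ∑ w, if side w ≠ side u then A u w * v w / v u else 0
      with hS_def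
    have hSapp : ∀ u, S u = ∑ w, if side w ≠ side u then A u w * v w / v u else 0 :=
      fun u => rfl
    have hSle : ∀ u, v u ≠ 0 → S u ≤ A u u := by
      intro u hu
      have hupos : 0 < v u := (hv0 u).lt_of_ne (Ne.symm hu)
      have hsplit : S u = (∑ w, if side w ≠ side u then A u w * v w else 0) / v u := by
        rw [hSapp, Finset.sum_div]
        refine Finset.sum_congr rfl fun w _ => ?_
        split <;> simp
      rw [hsplit, div_le_iff₀ hupos]
      exact hDom u
    obtain ⟨u₀, hu₀⟩ : ∃ u, v u ≠ 0 := by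
      by_contra hc
      push_neg at hc
      have h0 : (∑ u, v u) = 0 := Finset.sum_eq_zero fun u _ => hc u
      rw [hvsum] at h0
      norm_num at h0
    have hZlt : Fintype.card {u : ι // v u = 0} < Fintype.card ι :=
      Fintype.card_subtype_lt (x := u₀) hu₀
    obtain ⟨s₀, y, hy, hysum⟩ := ih {u : ι // v u = 0} (fun z => side z.1)
      (A.submatrix Subtype.val Subtype.val)
      (Nat.lt_succ_iff.mp (lt_of_lt_of_le hZlt hcard))
      (hPSD.submatrix _)
      (fun u w => hA0 _ _)
      (fun u w huw hss => hsame _ _ (fun h => huw (Subtype.ext h)) hss)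
    set xZ : Fin s₀ → ι → ℝ := fun t r => if h : v r = 0 then y t ⟨r, h⟩ else 0 with hxZ_def
    set xP : ι × ι → ι → ℝ := fun p r =>
      (if r = p.1 ∧ side p.1 = true ∧ side p.2 = false
        then Real.sqrt (A p.1 p.2 * v p.2 / v p.1) else 0)
      + (if r = p.2 ∧ side p.1 = true ∧ side p.2 = false
        then Real.sqrt (A p.1 p.2 * v p.1 / v p.2) else 0) with hxP_def
    set xL : ι → ι → ℝ := fun u r => if r = u ∧ v u ≠ 0 then Real.sqrt (A u u - S u) else 0
      with hxL_def
    have hxnn : ∀ (t : Fin s₀ ⊕ ι × ι ⊕ ι) (i : ι),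
        0 ≤ Sum.elim xZ (Sum.elim xP xL) t i := by
      rintro (t | p | u) i
      · simp only [Sum.elim_inl, hxZ_def]
        split
        · exact hy _ _
        · exact le_rfl
      · simp only [Sum.elim_inr, Sum.elim_inl, hxP_def]
        apply add_nonneg
        · split
          · exact Real.sqrt_nonneg _
          · exact le_rfl
        · split
          · exact Real.sqrt_nonneg _
          · exact le_rfl
      · simp only [Sum.elim_inr, hxL_def]
        split
        · exact Real.sqrt_nonneg _
        · exact le_rfl
    have hsum : A = ∑ t : Fin s₀ ⊕ ι × ι ⊕ ι,
        Matrix.vecMulVec (Sum.elim xZ (Sum.elim xP xL) t) (Sum.elim xZ (Sum.elim xP xL) t) := by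
      ext r r'
      rw [Matrix.sum_apply]
      simp only [Matrix.vecMulVec_apply]
      rw [Fintype.sum_sum_type, Fintype.sum_sum_type, Fintype.sum_prod_type]
      simp only [Sum.elim_inl, Sum.elim_inr]
      have HZ : (∑ t : Fin s₀, xZ t r * xZ t r')
          = if v r = 0 ∧ v r' = 0 then A r r' else 0 := by
        by_cases hr : v r = 0
        · by_cases hr' : v r' = 0
          · rw [if_pos ⟨hr, hr'⟩]
            have h1 := congrFun (congrFun hysum ⟨r, hr⟩) ⟨r', hr'⟩
            rw [Matrix.sum_apply] at h1
            simp only [Matrix.vecMulVec_apply, Matrix.submatrix_apply] at h1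
            rw [show (∑ t : Fin s₀, xZ t r * xZ t r')
                = ∑ t : Fin s₀, y t ⟨r, hr⟩ * y t ⟨r', hr'⟩ from
              Finset.sum_congr rfl fun t _ => by rw [hxZ_def]; simp only; rw [dif_pos hr, dif_pos hr']]
            exact h1.symm
          · rw [if_neg (by tauto)]
            refine Finset.sum_eq_zero fun t _ => ?_
            rw [hxZ_def]; simp only; rw [dif_neg hr', mul_zero]
        · rw [if_neg (by tauto)]
          refine Finset.sum_eq_zero fun t _ => ?_
          rw [hxZ_def]; simp only; rw [dif_neg hr, zero_mul]
      by_cases hrr : r = r'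
      · subst hrr
        have HPdiag : (∑ u, ∑ w, xP (u, w) r * xP (u, w) r)
            = (∑ w, if side r = true ∧ side w = false then A r w * v w / v r else 0)
              + (∑ u, if side u = true ∧ side r = false then A u r * v u / v r else 0) := by
          have hterm : ∀ u w, xP (u, w) r * xP (u, w) r
              = (if r = u ∧ side u = true ∧ side w = false then A u w * v w / v u else 0)
                + (if r = w ∧ side u = true ∧ side w = false then A u w * v u / v w else 0) := by
            intro u w
            rw [hxP_def]
            simp only
            rw [add_mul, mul_add, mul_add, ite_zero_mul_ite_zero, ite_zero_mul_ite_zero,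
              ite_zero_mul_ite_zero, ite_zero_mul_ite_zero]
            rw [if_neg (c := (r = u ∧ side u = true ∧ side w = false)
                ∧ (r = w ∧ side u = true ∧ side w = false))
              (by rintro ⟨⟨hru, hsu, -⟩, ⟨hrw, -, hsw⟩⟩
                  rw [← hru] at hsu; rw [← hrw] at hsw; rw [hsu] at hsw; exact absurd hsw (by simp))]
            rw [if_neg (c := (r = w ∧ side u = true ∧ side w = false)
                ∧ (r = u ∧ side u = true ∧ side w = false))
              (by rintro ⟨⟨hrw, -, hsw⟩, ⟨hru, hsu, -⟩⟩
                  rw [← hru] at hsu; rw [← hrw] at hsw; rw [hsu] at hsw; exact absurd hsw (by simp))]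
            have e1 : (if (r = u ∧ side u = true ∧ side w = false)
                ∧ (r = u ∧ side u = true ∧ side w = false)
                then Real.sqrt (A u w * v w / v u) * Real.sqrt (A u w * v w / v u) else 0)
                = (if r = u ∧ side u = true ∧ side w = false then A u w * v w / v u else 0) := by
              by_cases h : r = u ∧ side u = true ∧ side w = false
              · rw [if_pos ⟨h, h⟩, if_pos h]
                exact Real.mul_self_sqrt
                  (div_nonneg (mul_nonneg (hA0 u w) (hv0 w)) (hv0 u))
              · rw [if_neg (fun hh => h hh.1), if_neg h]
            have e2 : (if (r = w ∧ side u = true ∧ side w = false)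
                ∧ (r = w ∧ side u = true ∧ side w = false)
                then Real.sqrt (A u w * v u / v w) * Real.sqrt (A u w * v u / v w) else 0)
                = (if r = w ∧ side u = true ∧ side w = false then A u w * v u / v w else 0) := by
              by_cases h : r = w ∧ side u = true ∧ side w = false
              · rw [if_pos ⟨h, h⟩, if_pos h]
                exact Real.mul_self_sqrt
                  (div_nonneg (mul_nonneg (hA0 u w) (hv0 u)) (hv0 w))
              · rw [if_neg (fun hh => h hh.1), if_neg h]
            linear_combination e1 + e2
          rw [Finset.sum_congr rfl fun u _ => Finset.sum_congr rfl fun w _ => hterm u w]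
          simp only [Finset.sum_add_distrib]
          congr 1
          · simp only [ite_and]
            rw [Finset.sum_comm]
            simp only [Finset.sum_ite_eq, Finset.mem_univ, if_true]
          · simp only [ite_and]
            simp only [Finset.sum_ite_eq, Finset.mem_univ, if_true]
        have HLdiag : (∑ u, xL u r * xL u r) = if v r ≠ 0 then A r r - S r else 0 := by
          have hterm : ∀ u, xL u r * xL u r = if r = u ∧ v u ≠ 0 then A u u - S u else 0 := by
            intro u
            rw [hxL_def]
            simp only
            rw [ite_zero_mul_ite_zero]
            by_cases h : r = u ∧ v u ≠ 0
            · rw [if_pos ⟨h, h⟩, if_pos h]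
              exact Real.mul_self_sqrt (by have := hSle u h.2; linarith)
            · rw [if_neg (fun hh => h hh.1), if_neg h]
          rw [Finset.sum_congr rfl fun u _ => hterm u]
          simp only [ite_and]
          simp only [Finset.sum_ite_eq, Finset.mem_univ, if_true]
        rw [HZ, HPdiag, HLdiag]
        by_cases hvr : v r = 0
        · rw [if_pos ⟨hvr, hvr⟩, if_neg (by simpa using hvr)]
          have hz1 : (∑ w, if side r = true ∧ side w = false then A r w * v w / v r else 0)
              = 0 := by
            refine Finset.sum_eq_zero fun w _ => ?_
            split
            · rw [hvr, div_zero]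
            · rfl
          have hz2 : (∑ u, if side u = true ∧ side r = false then A u r * v u / v r else 0)
              = 0 := by
            refine Finset.sum_eq_zero fun u _ => ?_
            split
            · rw [hvr, div_zero]
            · rfl
          rw [hz1, hz2]
          ring
        · rw [if_neg (by tauto), if_pos hvr]
          have hT : (∑ w, if side r = true ∧ side w = false then A r w * v w / v r else 0)
              + (∑ u, if side u = true ∧ side r = false then A u r * v u / v r else 0)
              = S r := by
            by_cases hsr : side r
            · have h2 : (∑ u, if side u = true ∧ side r = false then A u r * v u / v r else 0)
                  = 0 :=
                Finset.sum_eq_zero fun u _ => if_neg (by simp [hsr])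
              have h1 : (∑ w, if side r = true ∧ side w = false then A r w * v w / v r else 0)
                  = S r := by
                rw [hSapp]
                refine Finset.sum_congr rfl fun w _ => ?_
                by_cases hw : side w <;> simp [hsr, hw]
              rw [h1, h2, add_zero]
            · have hsr' : side r = false := by simpa using hsr
              have h1 : (∑ w, if side r = true ∧ side w = false then A r w * v w / v r else 0)
                  = 0 :=
                Finset.sum_eq_zero fun w _ => if_neg (by simp [hsr'])
              have h2 : (∑ u, if side u = true ∧ side r = false then A u r * v u / v r else 0)
                  = S r := by
                rw [hSapp]
                refine Finset.sum_congr rfl fun u _ => ?_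
                have hAur : A u r = A r u := (hsymm u r).symm
                by_cases hu : side u <;> simp [hsr', hu, hAur]
              rw [h1, h2, zero_add]
          rw [hT]
          ring
      · have HPoff : (∑ u, ∑ w, xP (u, w) r * xP (u, w) r')
            = (if side r = true ∧ side r' = false
                then Real.sqrt (A r r' * v r' / v r) * Real.sqrt (A r r' * v r / v r') else 0)
              + (if side r' = true ∧ side r = false
                then Real.sqrt (A r' r * v r' / v r) * Real.sqrt (A r' r * v r / v r') else 0) := by
          have hterm : ∀ u w, xP (u, w) r * xP (u, w) r'
              = (if r = u ∧ r' = w ∧ side u = true ∧ side w = false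
                  then Real.sqrt (A u w * v w / v u) * Real.sqrt (A u w * v u / v w) else 0)
                + (if r' = u ∧ r = w ∧ side u = true ∧ side w = false
                  then Real.sqrt (A u w * v u / v w) * Real.sqrt (A u w * v w / v u) else 0) := by
            intro u w
            rw [hxP_def]
            simp only
            rw [add_mul, mul_add, mul_add, ite_zero_mul_ite_zero, ite_zero_mul_ite_zero,
              ite_zero_mul_ite_zero, ite_zero_mul_ite_zero]
            rw [if_neg (c := (r = u ∧ side u = true ∧ side w = false)
                ∧ (r' = u ∧ side u = true ∧ side w = false))
              (by rintro ⟨⟨h1, -⟩, ⟨h2, -⟩⟩; exact hrr (h1.trans h2.symm))]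
            rw [if_neg (c := (r = w ∧ side u = true ∧ side w = false)
                ∧ (r' = w ∧ side u = true ∧ side w = false))
              (by rintro ⟨⟨h1, -⟩, ⟨h2, -⟩⟩; exact hrr (h1.trans h2.symm))]
            rw [if_congr (show ((r = u ∧ side u = true ∧ side w = false)
                ∧ (r' = w ∧ side u = true ∧ side w = false))
                ↔ (r = u ∧ r' = w ∧ side u = true ∧ side w = false) by tauto) rfl rfl]
            rw [if_congr (show ((r = w ∧ side u = true ∧ side w = false)
                ∧ (r' = u ∧ side u = true ∧ side w = false))
                ↔ (r' = u ∧ r = w ∧ side u = true ∧ side w = false) by tauto) rfl rfl]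
            ring
          rw [Finset.sum_congr rfl fun u _ => Finset.sum_congr rfl fun w _ => hterm u w]
          simp only [Finset.sum_add_distrib]
          congr 1
          · simp only [ite_and]
            rw [Finset.sum_comm]
            simp only [Finset.sum_ite_eq, Finset.mem_univ, if_true]
          · simp only [ite_and]
            rw [Finset.sum_comm]
            simp only [Finset.sum_ite_eq, Finset.mem_univ, if_true]
        have HLoff : (∑ u, xL u r * xL u r') = 0 := by
          refine Finset.sum_eq_zero fun u _ => ?_
          rw [hxL_def]
          simp only
          rw [ite_zero_mul_ite_zero]
          exact if_neg (by rintro ⟨⟨h1, -⟩, ⟨h2, -⟩⟩; exact hrr (h1.trans h2.symm))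
        rw [HZ, HPoff, HLoff]
        by_cases hss : side r = side r'
        · have hArr : A r r' = 0 := hsame r r' hrr hss
          have hArr2 : A r' r = 0 := hsymm r' r ▸ hArr
          simp [hArr, hArr2]
        · rcases Bool.eq_false_or_eq_true (side r) with hbr | hbr <;>
            rcases Bool.eq_false_or_eq_true (side r') with hbr' | hbr'
          · exact absurd (hbr.trans hbr'.symm) hss
          · -- side r = true, side r' = false
            rw [if_pos (c := side r = true ∧ side r' = false) ⟨hbr, hbr'⟩,
              if_neg (c := side r' = true ∧ side r = false)
                (fun hh => by rw [hbr'] at hh; exact Bool.false_ne_true hh.1)]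
            have hArr : A r r' = A r' r := hsymm r' r
            by_cases hvr : v r = 0
            · by_cases hvr' : v r' = 0
              · rw [if_pos (c := v r = 0 ∧ v r' = 0) ⟨hvr, hvr'⟩]
                rw [hvr']
                simp
              · have hz : A r r' * v r' = 0 :=
                  hprop r r' hvr (by simp [hbr, hbr'])
                have hA0' : A r r' = 0 := by
                  rcases mul_eq_zero.mp hz with h | h
                  · exact h
                  · exact absurd h hvr'
                rw [if_neg (c := v r = 0 ∧ v r' = 0) (fun hh => hvr' hh.2)]
                simp [hA0']
            · by_cases hvr' : v r' = 0
              · have hz : A r' r * v r = 0 :=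
                  hprop r' r hvr' (by simp [hbr, hbr'])
                have hA0'' : A r' r = 0 := by
                  rcases mul_eq_zero.mp hz with h | h
                  · exact h
                  · exact absurd h hvr
                have hA0' : A r r' = 0 := by rw [hArr, hA0'']
                rw [if_neg (c := v r = 0 ∧ v r' = 0) (fun hh => hvr hh.1)]
                simp [hA0']
              · rw [if_neg (c := v r = 0 ∧ v r' = 0) (fun hh => hvr hh.1)]
                have hnn1 : 0 ≤ A r r' * v r' / v r :=
                  div_nonneg (mul_nonneg (hA0 r r') (hv0 r')) (hv0 r)
                rw [← Real.sqrt_mul hnn1]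
                have hval : (A r r' * v r' / v r) * (A r r' * v r / v r') = (A r r')^2 := by
                  field_simp
                rw [hval, Real.sqrt_sq (hA0 r r')]
                ring
          · -- side r = false, side r' = true
            rw [if_neg (c := side r = true ∧ side r' = false)
                (fun hh => by rw [hbr] at hh; exact Bool.false_ne_true hh.1),
              if_pos (c := side r' = true ∧ side r = false) ⟨hbr', hbr⟩]
            have hArr : A r r' = A r' r := hsymm r' r
            by_cases hvr : v r = 0
            · by_cases hvr' : v r' = 0
              · rw [if_pos (c := v r = 0 ∧ v r' = 0) ⟨hvr, hvr'⟩]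
                rw [hvr']
                simp
              · have hz : A r r' * v r' = 0 :=
                  hprop r r' hvr (by simp [hbr, hbr'])
                have hA0' : A r r' = 0 := by
                  rcases mul_eq_zero.mp hz with h | h
                  · exact h
                  · exact absurd h hvr'
                have hA0'' : A r' r = 0 := hArr ▸ hA0'
                rw [if_neg (c := v r = 0 ∧ v r' = 0) (fun hh => hvr' hh.2)]
                simp [hA0', hA0'']
            · by_cases hvr' : v r' = 0
              · have hz : A r' r * v r = 0 :=
                  hprop r' r hvr' (by simp [hbr, hbr'])
                have hA0'' : A r' r = 0 := by
                  rcases mul_eq_zero.mp hz with h | h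
                  · exact h
                  · exact absurd h hvr
                have hA0' : A r r' = 0 := by rw [hArr, hA0'']
                rw [if_neg (c := v r = 0 ∧ v r' = 0) (fun hh => hvr hh.1)]
                simp [hA0', hA0'']
              · rw [if_neg (c := v r = 0 ∧ v r' = 0) (fun hh => hvr hh.1)]
                have hnn1 : 0 ≤ A r' r * v r' / v r :=
                  div_nonneg (mul_nonneg (hA0 r' r) (hv0 r')) (hv0 r)
                rw [← Real.sqrt_mul hnn1]
                have hval : (A r' r * v r' / v r) * (A r' r * v r / v r') = (A r' r)^2 := by
                  field_simp
                rw [hval, Real.sqrt_sq (hA0 r' r)]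
                rw [hArr]
                ring
          · exact absurd (hbr.trans hbr'.symm) hss
    rw [hsum]
    exact isCP_sum _ hxnn

/-- A doubly nonnegative matrix of block form `[[D₀, B], [Bᵀ, D₁]]` with
`D₀, D₁` diagonal is completely positive. -/
theorem stmt6 (n : ℕ) (D₀ D₁ B : Matrix (Fin n) (Fin n) ℝ)
    (hD₀ : D₀.IsDiag) (hD₁ : D₁.IsDiag)
    (A : Matrix (Fin n ⊕ Fin n) (Fin n ⊕ Fin n) ℝ)
    (hA : A = Matrix.fromBlocks D₀ B Bᵀ D₁)
    (hPSD : A.PosSemidef) (hNN : ∀ u v, 0 ≤ A u v) :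
    IsCPMatrix A := by
  apply keyCP (Fintype.card (Fin n ⊕ Fin n)) _ (Sum.elim (fun _ => true) (fun _ => false))
    A le_rfl hPSD hNN
  rintro (i | i) (j | j) huv hside
  · have hij : i ≠ j := fun h => huv (by rw [h])
    rw [hA]
    exact hD₀ hij
  · simp at hside
  · simp at hside
  · have hij : i ≠ j := fun h => huv (by rw [h])
    rw [hA]
    exact hD₁ hij
end

section
/- Every CPDNN qutrit-to-qubit quantum channel Φ : M_3(ℂ) → M_2(ℂ) is CPCP: if Φ is a completely positive trace-preserving linear map such that (id_k ⊗ Φ) maps doubly nonnegative matrices in M_{3k} to doubly nonnegative matrices in M_{2k} for every k ∈ ℕ, then (id_k ⊗ Φ) maps completely positive matrices in M_{3k} to completely positive matrices in M_{2k} for every k ∈ ℕ. -/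
open Matrix
open scoped ComplexOrder

/-- A complex matrix is completely positive if it is a finite sum of rank-one
matrices `x xᵀ` with `x` a real entrywise nonnegative vector (viewed in `ℂ`). -/
def IsCPMat {ι : Type*} [Fintype ι] (A : Matrix ι ι ℂ) : Prop :=
  ∃ (s : ℕ) (x : Fin s → ι → ℝ), (∀ t i, 0 ≤ x t i) ∧
    ∀ i j, A i j = ((∑ t, x t i * x t j : ℝ) : ℂ)

/-- A complex matrix is doubly nonnegative if it is positive semidefinite and
every entry is a nonnegative real number. -/
def IsDNNMat {ι : Type*} [Fintype ι] (A : Matrix ι ι ℂ) : Prop :=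
  A.PosSemidef ∧ ∀ i j, 0 ≤ (A i j).re ∧ (A i j).im = 0

/-- The map `id_k ⊗ Φ` acting blockwise: the `((a,p),(b,q))` entry of the output
is `Φ(X_{ab})_{pq}`, where `X_{ab}` is the `(a,b)` block of `X`. -/
def idTensor {n m : ℕ} (Φ : Matrix (Fin n) (Fin n) ℂ →ₗ[ℂ] Matrix (Fin m) (Fin m) ℂ)
    (k : ℕ) (X : Matrix (Fin k × Fin n) (Fin k × Fin n) ℂ) :
    Matrix (Fin k × Fin m) (Fin k × Fin m) ℂ :=
  Matrix.of fun ap bq => Φ (Matrix.of fun i j => X (ap.1, i) (bq.1, j)) ap.2 bq.2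

/-- `Φ` is completely positive as a linear map between matrix algebras. -/
def IsCPMap {n m : ℕ} (Φ : Matrix (Fin n) (Fin n) ℂ →ₗ[ℂ] Matrix (Fin m) (Fin m) ℂ) : Prop :=
  ∀ (k : ℕ) (X : Matrix (Fin k × Fin n) (Fin k × Fin n) ℂ),
    X.PosSemidef → (idTensor Φ k X).PosSemidef

/-- `Φ` is trace-preserving. -/
def IsTP {n m : ℕ} (Φ : Matrix (Fin n) (Fin n) ℂ →ₗ[ℂ] Matrix (Fin m) (Fin m) ℂ) : Prop :=
  ∀ X, (Φ X).trace = X.trace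

/-- `Φ` is CPCP: `id_k ⊗ Φ` maps completely positive matrices to completely
positive matrices for every `k`. -/
def IsCPCP {n m : ℕ} (Φ : Matrix (Fin n) (Fin n) ℂ →ₗ[ℂ] Matrix (Fin m) (Fin m) ℂ) : Prop :=
  ∀ (k : ℕ) (X : Matrix (Fin k × Fin n) (Fin k × Fin n) ℂ),
    IsCPMat X → IsCPMat (idTensor Φ k X)

/-- `Φ` is CPDNN: `id_k ⊗ Φ` maps doubly nonnegative matrices to doubly
nonnegative matrices for every `k`. -/
def IsCPDNN {n m : ℕ} (Φ : Matrix (Fin n) (Fin n) ℂ →ₗ[ℂ] Matrix (Fin m) (Fin m) ℂ) : Prop :=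
  ∀ (k : ℕ) (X : Matrix (Fin k × Fin n) (Fin k × Fin n) ℂ),
    IsDNNMat X → IsDNNMat (idTensor Φ k X)

/-- The Choi matrix `J(Φ) = Σ_{i,j} E_{ij} ⊗ Φ(E_{ij})`, with
`((i,p),(j,q))` entry equal to `Φ(E_{ij})_{pq}`. -/
def choi {n m : ℕ} (Φ : Matrix (Fin n) (Fin n) ℂ →ₗ[ℂ] Matrix (Fin m) (Fin m) ℂ) :
    Matrix (Fin n × Fin m) (Fin n × Fin m) ℂ :=
  Matrix.of fun ip jq => Φ (Matrix.single ip.1 jq.1 1) ip.2 jq.2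

lemma inv_one_nonneg {ι : Type*} [Fintype ι] [DecidableEq ι]
    (A : Matrix ι ι ℝ) (hA : A.PosDef)
    (hoff : ∀ u v, u ≠ v → A u v ≤ 0) (w : ι → ℝ) (hw : A *ᵥ w = 1) :
    ∀ u, 0 ≤ w u := by
  by_contra hcon
  push_neg at hcon
  obtain ⟨u0, hu0⟩ := hcon
  set n : ι → ℝ := fun u => max (-(w u)) 0 with hn
  set p : ι → ℝ := fun u => max (w u) 0 with hp
  have hnneg : ∀ u, 0 ≤ n u := fun u => le_max_right _ _
  have hpneg : ∀ u, 0 ≤ p u := fun u => le_max_right _ _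
  have hpn : ∀ u, p u * n u = 0 := by
    intro u
    rcases le_total 0 (w u) with h | h
    · have : n u = 0 := by simp [hn, neg_nonpos.mpr h, max_eq_right]
      simp [this]
    · have : p u = 0 := by simp [hp, h, max_eq_right]
      simp [this]
  have hw_eq : w = p - n := by
    funext u
    simp only [Pi.sub_apply, hp, hn]
    rw [max_zero_sub_max_neg_zero_eq_self]
  have hne : n ≠ 0 := by
    intro h
    have := congrFun h u0
    simp only [hn, Pi.zero_apply] at this
    have : -(w u0) ≤ 0 := le_of_max_le_left this.le
    linarith
  have key1 : n ⬝ᵥ (A *ᵥ w) = ∑ u, n u := by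
    rw [hw]; simp [dotProduct]
  have key3 : n ⬝ᵥ (A *ᵥ p) ≤ 0 := by
    have : n ⬝ᵥ (A *ᵥ p) = ∑ u, ∑ v, n u * A u v * p v := by
      simp [dotProduct, mulVec, Finset.mul_sum, mul_assoc]
    rw [this]
    apply Finset.sum_nonpos
    intro u _
    apply Finset.sum_nonpos
    intro v _
    rcases eq_or_ne u v with rfl | huv
    · have : n u * A u u * p u = A u u * (p u * n u) := by ring
      rw [this, hpn, mul_zero]
    · have h1 : A u v ≤ 0 := hoff u v huv
      have : n u * A u v ≤ 0 := mul_nonpos_of_nonneg_of_nonpos (hnneg u) h1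
      exact mul_nonpos_of_nonpos_of_nonneg this (hpneg v)
  have key4 : 0 < n ⬝ᵥ (A *ᵥ n) := by
    have := hA.dotProduct_mulVec_pos hne
    simpa using this
  have key2 : n ⬝ᵥ (A *ᵥ w) = n ⬝ᵥ (A *ᵥ p) - n ⬝ᵥ (A *ᵥ n) := by
    rw [hw_eq, Matrix.mulVec_sub, dotProduct_sub]
  have hsum : 0 ≤ ∑ u, n u := Finset.sum_nonneg fun u _ => hnneg u
  rw [key1] at key2
  linarith

lemma bipartite_posdef_decomp {ι₀ : Type*} [Fintype ι₀] [DecidableEq ι₀]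
    (R : Matrix (ι₀ × Fin 2) (ι₀ × Fin 2) ℝ) (hPD : R.PosDef)
    (hsym : ∀ u v, R u v = R v u)
    (hnn : ∀ u v, 0 ≤ R u v)
    (hzero : ∀ i j p, i ≠ j → R (i, p) (j, p) = 0) :
    ∃ z : ((ι₀ × ι₀) ⊕ (ι₀ × Fin 2)) → (ι₀ × Fin 2) → ℝ,
      (∀ t u, 0 ≤ z t u) ∧ (∀ t u, z t u ^ 2 ≤ R u u) ∧
      (∀ u v, R u v = ∑ t, z t u * z t v) := by
  classical
  set sg : Fin 2 → ℝ := fun p => if p = 0 then 1 else -1 with hsg_def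
  have hsgcases : ∀ p q : Fin 2, (p = q ∧ sg p * sg q = 1) ∨ (p ≠ q ∧ sg p * sg q = -1) := by
    intro p q
    fin_cases p <;> fin_cases q <;> simp [hsg_def] <;> norm_num
  have hsg_sq : ∀ p : Fin 2, sg p * sg p = 1 := by
    intro p; rcases hsgcases p p with ⟨_, h⟩ | ⟨h, _⟩; exact h; exact absurd rfl h
  have hsg_ne : ∀ p : Fin 2, sg p ≠ 0 := by
    intro p; fin_cases p <;> simp [hsg_def]
  set A : Matrix (ι₀ × Fin 2) (ι₀ × Fin 2) ℝ :=
    Matrix.of fun u v => sg u.2 * sg v.2 * R u v with hA_def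
  have hA_apply : ∀ u v, A u v = sg u.2 * sg v.2 * R u v := fun u v => rfl
  have hAoff : ∀ u v, u ≠ v → A u v ≤ 0 := by
    rintro ⟨i, p⟩ ⟨j, q⟩ huv
    rw [hA_apply]
    rcases hsgcases p q with ⟨hpq, hval⟩ | ⟨hpq, hval⟩
    · subst hpq
      have h1 : i ≠ j := by
        intro h; exact huv (by rw [h])
      rw [hzero i j p h1, mul_zero]
    · rw [hval]
      have := hnn (i,p) (j,q)
      linarith
  have hA_herm : A.IsHermitian := by
    ext u v
    simp only [conjTranspose_apply, hA_apply, star_trivial]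
    rw [hsym]; ring
  have hA_pd : A.PosDef := by
    refine .of_dotProduct_mulVec_pos hA_herm fun x hx => ?_
    set y : (ι₀ × Fin 2) → ℝ := fun u => sg u.2 * x u with hy_def
    have hy_ne : y ≠ 0 := by
      intro h
      apply hx
      funext u
      have := congrFun h u
      simp only [hy_def, Pi.zero_apply] at this
      rcases mul_eq_zero.mp this with h1 | h1
      · exact absurd h1 (hsg_ne u.2)
      · exact h1
    have hform : star x ⬝ᵥ (A *ᵥ x) = star y ⬝ᵥ (R *ᵥ y) := by
      simp only [dotProduct, mulVec, star_trivial, hy_def, Finset.mul_sum, hA_apply]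
      apply Finset.sum_congr rfl
      intro u _
      apply Finset.sum_congr rfl
      intro v _
      ring
    rw [hform]
    exact hPD.dotProduct_mulVec_pos hy_ne
  have hdet : IsUnit A := hA_pd.isUnit
  set w : (ι₀ × Fin 2) → ℝ := A⁻¹ *ᵥ 1 with hw_def
  have hw : A *ᵥ w = 1 := by
    rw [hw_def, Matrix.mulVec_mulVec, Matrix.mul_nonsing_inv _ ((Matrix.isUnit_iff_isUnit_det _).mp hdet), Matrix.one_mulVec]
  have hw0 : ∀ u, 0 ≤ w u := inv_one_nonneg A hA_pd hAoff w hw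
  have hAw : ∀ u, ∑ v, A u v * w v = 1 := by
    intro u
    have := congrFun hw u
    simpa [mulVec, dotProduct] using this
  -- key identities
  have E0 : ∀ i, R (i,0) (i,0) * w (i,0) = 1 + ∑ j, R (i,0) (j,1) * w (j,1) := by
    intro i
    have h := hAw (i, 0)
    rw [Fintype.sum_prod_type] at h
    have hsplit : ∀ j : ι₀, ∑ q : Fin 2, A (i,0) (j,q) * w (j,q)
        = (if j = i then R (i,0) (i,0) * w (i,0) else 0) - R (i,0) (j,1) * w (j,1) := by
      intro j
      rw [Fin.sum_univ_two]
      have h1 : A (i,0) (j,0) = R (i,0) (j,0) := by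
        rw [hA_apply]; simp [hsg_def]
      have h2 : A (i,0) (j,1) = - R (i,0) (j,1) := by
        rw [hA_apply]; simp [hsg_def]
      rcases eq_or_ne j i with rfl | hji
      · simp [h1, h2]; ring
      · rw [h1, h2, hzero i j 0 (Ne.symm hji)]
        simp [hji]
    rw [Finset.sum_congr rfl (fun j _ => hsplit j)] at h
    rw [Finset.sum_sub_distrib, Finset.sum_ite_eq' Finset.univ i] at h
    simp only [Finset.mem_univ, if_true] at h
    linarith
  have E1 : ∀ i, R (i,1) (i,1) * w (i,1) = 1 + ∑ j, R (j,0) (i,1) * w (j,0) := by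
    intro i
    have h := hAw (i, 1)
    rw [Fintype.sum_prod_type] at h
    have hsplit : ∀ j : ι₀, ∑ q : Fin 2, A (i,1) (j,q) * w (j,q)
        = (if j = i then R (i,1) (i,1) * w (i,1) else 0) - R (j,0) (i,1) * w (j,0) := by
      intro j
      rw [Fin.sum_univ_two]
      have h1 : A (i,1) (j,0) = - R (i,1) (j,0) := by
        rw [hA_apply]; simp [hsg_def]
      have h2 : A (i,1) (j,1) = R (i,1) (j,1) := by
        rw [hA_apply]; simp [hsg_def]
      rcases eq_or_ne j i with rfl | hji
      · simp [h1, h2, hsym (j,0) (j,1)]; ring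
      · rw [h1, h2, hzero i j 1 (Ne.symm hji), hsym (i,1) (j,0)]
        simp [hji]
    rw [Finset.sum_congr rfl (fun j _ => hsplit j)] at h
    rw [Finset.sum_sub_distrib, Finset.sum_ite_eq' Finset.univ i] at h
    simp only [Finset.mem_univ, if_true] at h
    linarith
  have hcross0 : ∀ (i : ι₀) (j : ι₀), 0 ≤ R (i,0) (j,1) * w (j,1) :=
    fun i j => mul_nonneg (hnn _ _) (hw0 _)
  have hcross1 : ∀ (i : ι₀) (j : ι₀), 0 ≤ R (j,0) (i,1) * w (j,0) :=
    fun i j => mul_nonneg (hnn _ _) (hw0 _)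
  have hp2 : ∀ p : Fin 2, p = 0 ∨ p = 1 := by decide
  have hRw1 : ∀ u, 1 ≤ R u u * w u := by
    rintro ⟨i, p⟩
    rcases hp2 p with rfl | rfl
    · rw [E0 i]
      have : 0 ≤ ∑ j, R (i,0) (j,1) * w (j,1) := Finset.sum_nonneg fun j _ => hcross0 i j
      linarith
    · rw [E1 i]
      have : 0 ≤ ∑ j, R (j,0) (i,1) * w (j,0) := Finset.sum_nonneg fun j _ => hcross1 i j
      linarith
  have hwpos : ∀ u, 0 < w u := by
    intro u
    rcases (hw0 u).lt_or_eq with h | h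
    · exact h
    · exfalso; have := hRw1 u; rw [← h, mul_zero] at this; linarith
  have hRuu_pos : ∀ u, 0 < R u u := by
    intro u
    by_contra h
    push_neg at h
    have := hRw1 u
    nlinarith [hwpos u]
  set a : ι₀ → ι₀ → ℝ := fun i j => R (i,0) (j,1) * w (j,1) / w (i,0) with ha_def
  set b : ι₀ → ι₀ → ℝ := fun i j => R (i,0) (j,1) * w (i,0) / w (j,1) with hb_def
  have ha0 : ∀ i j, 0 ≤ a i j := fun i j => div_nonneg (hcross0 i j) (hw0 _)
  have hb0 : ∀ i j, 0 ≤ b i j := fun i j =>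
    div_nonneg (mul_nonneg (hnn _ _) (hw0 _)) (hw0 _)
  have hab : ∀ i j, a i j * b i j = (R (i,0) (j,1))^2 := by
    intro i j
    have h0 := (hwpos (i,0)).ne'
    have h1 := (hwpos (j,1)).ne'
    rw [ha_def, hb_def]
    field_simp
  have hsa : ∀ i, ∑ j, a i j = R (i,0) (i,0) - 1 / w (i,0) := by
    intro i
    have hstep : (∑ j, a i j) = (∑ j, R (i,0) (j,1) * w (j,1)) / w (i,0) := by
      rw [Finset.sum_div]
    rw [hstep]
    rw [eq_sub_iff_add_eq, ← add_div, div_eq_iff (hwpos (i,0)).ne']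
    linarith [E0 i]
  have hsb : ∀ i, ∑ j, b j i = R (i,1) (i,1) - 1 / w (i,1) := by
    intro i
    have hstep : (∑ j, b j i) = (∑ j, R (j,0) (i,1) * w (j,0)) / w (i,1) := by
      rw [Finset.sum_div]
    rw [hstep]
    rw [eq_sub_iff_add_eq, ← add_div, div_eq_iff (hwpos (i,1)).ne']
    linarith [E1 i]
  set zE : (ι₀ × ι₀) → (ι₀ × Fin 2) → ℝ := fun ij u =>
    if u = (ij.1, 0) then Real.sqrt (a ij.1 ij.2)
    else if u = (ij.2, 1) then Real.sqrt (b ij.1 ij.2) else 0 with hzE_def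
  set zD : (ι₀ × Fin 2) → (ι₀ × Fin 2) → ℝ := fun v' u =>
    if u = v' then Real.sqrt (1 / w v') else 0 with hzD_def
  refine ⟨Sum.elim zE zD, ?_, ?_, ?_⟩
  · rintro (⟨i,j⟩ | v') u
    · simp only [Sum.elim_inl, hzE_def]
      split_ifs <;> first | exact Real.sqrt_nonneg _ | exact le_refl 0
    · simp only [Sum.elim_inr, hzD_def]
      split_ifs <;> first | exact Real.sqrt_nonneg _ | exact le_refl 0
  · rintro (⟨i,j⟩ | v') u
    · simp only [Sum.elim_inl, hzE_def]
      split_ifs with h1 h2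
      · subst h1
        rw [Real.sq_sqrt (ha0 i j)]
        have hle : a i j ≤ ∑ j', a i j' :=
          Finset.single_le_sum (fun j' _ => ha0 i j') (Finset.mem_univ j)
        have h2 := hsa i
        have hwp : 0 < 1 / w (i, (0 : Fin 2)) := one_div_pos.mpr (hwpos _)
        linarith
      · subst h2
        rw [Real.sq_sqrt (hb0 i j)]
        have hle : b i j ≤ ∑ i', b i' j :=
          Finset.single_le_sum (fun i' _ => hb0 i' j) (Finset.mem_univ i)
        have h2 := hsb j
        have hwp : 0 < 1 / w (j, (1 : Fin 2)) := one_div_pos.mpr (hwpos _)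
        linarith
      · simpa using (hRuu_pos u).le
    · simp only [Sum.elim_inr, hzD_def]
      split_ifs with h1
      · subst h1
        rw [Real.sq_sqrt (one_div_pos.mpr (hwpos u)).le]
        rw [div_le_iff₀ (hwpos u)]
        linarith [hRw1 u]
      · simpa using (hRuu_pos u).le
  · have hdiag : ∀ u v : ι₀ × Fin 2, (∑ v' : ι₀ × Fin 2, zD v' u * zD v' v)
        = if u = v then 1 / w u else 0 := by
      intro u v
      rw [Finset.sum_eq_single_of_mem u (Finset.mem_univ u)]
      · rcases eq_or_ne u v with rfl | huv
        · simp only [hzD_def, if_pos rfl]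
          exact Real.mul_self_sqrt (one_div_pos.mpr (hwpos u)).le
        · simp [hzD_def, huv, Ne.symm huv]
      · intro b' _ hb'
        have h : u ≠ b' := Ne.symm hb'
        simp [hzD_def, h]
    rintro ⟨l, p⟩ ⟨m, q⟩
    rw [Fintype.sum_sum_type]
    simp only [Sum.elim_inl, Sum.elim_inr]
    rw [hdiag]
    rcases hp2 p with rfl | rfl <;> rcases hp2 q with rfl | rfl
    · -- case (0,0)
      have hE : (∑ ij : ι₀ × ι₀, zE ij (l,0) * zE ij (m,0))
          = if l = m then ∑ j, a l j else 0 := by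
        rw [Fintype.sum_prod_type]
        have hinner : ∀ i : ι₀, (∑ j : ι₀, zE (i,j) (l,0) * zE (i,j) (m,0))
            = if i = l then (if l = m then ∑ j, a l j else 0) else 0 := by
          intro i
          have hz1 : ∀ j, zE (i,j) (l,0) = if l = i then Real.sqrt (a i j) else 0 := by
            intro j; simp [hzE_def, Prod.mk.injEq]
          have hz2 : ∀ j, zE (i,j) (m,0) = if m = i then Real.sqrt (a i j) else 0 := by
            intro j; simp [hzE_def, Prod.mk.injEq]
          simp only [hz1, hz2]
          rcases eq_or_ne i l with rfl | hil
          · rcases eq_or_ne i m with rfl | him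
            · simp [Real.mul_self_sqrt (ha0 i _)]
            · simp [him, Ne.symm him]
          · simp [hil, Ne.symm hil]
        rw [Finset.sum_congr rfl (fun i _ => hinner i), Finset.sum_ite_eq' Finset.univ l]
        simp
      rw [hE]
      rcases eq_or_ne l m with rfl | hlm
      · simp only [if_pos rfl, Prod.mk.injEq, and_true, eq_self_iff_true, if_true]
        have := hsa l
        have hwl := hwpos (l, (0:Fin 2))
        linarith
      · have hne : ((l, (0:Fin 2)) : ι₀ × Fin 2) ≠ (m, 0) := by
          simp [Prod.mk.injEq, hlm]
        rw [if_neg hlm, if_neg hne, hzero l m 0 hlm]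
        ring
    · -- case (0,1)
      have hE : (∑ ij : ι₀ × ι₀, zE ij (l,0) * zE ij (m,1)) = R (l,0) (m,1) := by
        rw [Fintype.sum_prod_type]
        have hinner : ∀ i : ι₀, (∑ j : ι₀, zE (i,j) (l,0) * zE (i,j) (m,1))
            = if i = l then Real.sqrt (a l m) * Real.sqrt (b l m) else 0 := by
          intro i
          have hz1 : ∀ j, zE (i,j) (l,0) = if l = i then Real.sqrt (a i j) else 0 := by
            intro j; simp [hzE_def, Prod.mk.injEq]
          have hz2 : ∀ j, zE (i,j) (m,1) = if m = j then Real.sqrt (b i j) else 0 := by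
            intro j; simp [hzE_def, Prod.mk.injEq]
          simp only [hz1, hz2]
          rcases eq_or_ne i l with rfl | hil
          · simp [mul_ite, Finset.sum_ite_eq]
          · simp [hil, Ne.symm hil]
        rw [Finset.sum_congr rfl (fun i _ => hinner i), Finset.sum_ite_eq' Finset.univ l]
        rw [if_pos (Finset.mem_univ l), ← Real.sqrt_mul (ha0 l m), hab, Real.sqrt_sq (hnn _ _)]
      rw [hE]
      have hne : ((l, (0:Fin 2)) : ι₀ × Fin 2) ≠ (m, 1) := by
        simp [Prod.mk.injEq]
      rw [if_neg hne]
      ring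
    · -- case (1,0)
      have hE : (∑ ij : ι₀ × ι₀, zE ij (l,1) * zE ij (m,0)) = R (l,1) (m,0) := by
        rw [Fintype.sum_prod_type]
        have hinner : ∀ i : ι₀, (∑ j : ι₀, zE (i,j) (l,1) * zE (i,j) (m,0))
            = if i = m then Real.sqrt (b m l) * Real.sqrt (a m l) else 0 := by
          intro i
          have hz1 : ∀ j, zE (i,j) (l,1) = if l = j then Real.sqrt (b i j) else 0 := by
            intro j; simp [hzE_def, Prod.mk.injEq]
          have hz2 : ∀ j, zE (i,j) (m,0) = if m = i then Real.sqrt (a i j) else 0 := by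
            intro j; simp [hzE_def, Prod.mk.injEq]
          simp only [hz1, hz2]
          rcases eq_or_ne i m with rfl | him
          · simp [ite_mul, Finset.sum_ite_eq]
          · simp [him, Ne.symm him]
        rw [Finset.sum_congr rfl (fun i _ => hinner i), Finset.sum_ite_eq' Finset.univ m]
        rw [if_pos (Finset.mem_univ m), mul_comm, ← Real.sqrt_mul (ha0 m l), hab,
          Real.sqrt_sq (hnn _ _), hsym (m,0) (l,1)]
      rw [hE]
      have hne : ((l, (1:Fin 2)) : ι₀ × Fin 2) ≠ (m, 0) := by
        simp [Prod.mk.injEq]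
      rw [if_neg hne]
      ring
    · -- case (1,1)
      have hE : (∑ ij : ι₀ × ι₀, zE ij (l,1) * zE ij (m,1))
          = if l = m then ∑ i, b i l else 0 := by
        rw [Fintype.sum_prod_type]
        have hinner : ∀ i : ι₀, (∑ j : ι₀, zE (i,j) (l,1) * zE (i,j) (m,1))
            = if l = m then b i l else 0 := by
          intro i
          have hz1 : ∀ j, zE (i,j) (l,1) = if l = j then Real.sqrt (b i j) else 0 := by
            intro j; simp [hzE_def, Prod.mk.injEq]
          have hz2 : ∀ j, zE (i,j) (m,1) = if m = j then Real.sqrt (b i j) else 0 := by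
            intro j; simp [hzE_def, Prod.mk.injEq]
          simp only [hz1, hz2]
          rcases eq_or_ne l m with rfl | hlm
          · simp [ite_mul, Finset.sum_ite_eq, Real.mul_self_sqrt (hb0 i _)]
          · rw [if_neg hlm]
            apply Finset.sum_eq_zero
            intro j _
            rcases eq_or_ne l j with rfl | hlj
            · simp [Ne.symm (hlm : l ≠ m) ]
            · simp [hlj]
        rw [Finset.sum_congr rfl (fun i _ => hinner i)]
        rcases eq_or_ne l m with rfl | hlm
        · simp
        · simp [hlm]
      rw [hE]
      rcases eq_or_ne l m with rfl | hlm
      · simp only [if_pos rfl, Prod.mk.injEq, and_true, eq_self_iff_true, if_true]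
        have := hsb l
        have hwl := hwpos (l, (1:Fin 2))
        linarith
      · have hne : ((l, (1:Fin 2)) : ι₀ × Fin 2) ≠ (m, 1) := by
          simp [Prod.mk.injEq, hlm]
        rw [if_neg hlm, if_neg hne, hzero l m 1 hlm]
        ring

lemma bipartite_psd_decomp {ι₀ : Type*} [Fintype ι₀] [DecidableEq ι₀]
    (R : Matrix (ι₀ × Fin 2) (ι₀ × Fin 2) ℝ) (hP : R.PosSemidef)
    (hnn : ∀ u v, 0 ≤ R u v)
    (hzero : ∀ i j p, i ≠ j → R (i, p) (j, p) = 0) :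
    ∃ z : ((ι₀ × ι₀) ⊕ (ι₀ × Fin 2)) → (ι₀ × Fin 2) → ℝ,
      (∀ t u, 0 ≤ z t u) ∧ (∀ u v, R u v = ∑ t, z t u * z t v) := by
  classical
  have hsym : ∀ u v : ι₀ × Fin 2, R u v = R v u := by
    intro u v
    conv_lhs => rw [← hP.1]
    simp [conjTranspose_apply]
  set c : (ι₀ × Fin 2) → ℝ := fun u => Real.sqrt (R u u + 1) with hc_def
  set Q : Set (((ι₀ × ι₀) ⊕ (ι₀ × Fin 2)) → (ι₀ × Fin 2) → ℝ) :=
    Set.pi Set.univ (fun _ => Set.pi Set.univ fun u => Set.Icc (0:ℝ) (c u)) with hQ_def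
  have hQmem : ∀ z, z ∈ Q ↔ ∀ t u, z t u ∈ Set.Icc (0:ℝ) (c u) := by
    intro z
    rw [hQ_def, Set.mem_univ_pi]
    constructor
    · intro h t u
      exact (Set.mem_univ_pi.mp (h t)) u
    · intro h t
      exact Set.mem_univ_pi.mpr (fun u => h t u)
  have hQc : IsCompact Q :=
    isCompact_univ_pi fun _ => isCompact_univ_pi fun u => isCompact_Icc
  set F : (((ι₀ × ι₀) ⊕ (ι₀ × Fin 2)) → (ι₀ × Fin 2) → ℝ)
      → Matrix (ι₀ × Fin 2) (ι₀ × Fin 2) ℝ := fun z => Matrix.of fun u v => ∑ t, z t u * z t v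
    with hF_def
  have hFc : Continuous F := by
    apply continuous_matrix
    intro u v
    apply continuous_finset_sum
    intro t _
    fun_prop
  have himg : IsCompact (F '' Q) := hQc.image hFc
  have hmem : ∀ m : ℕ, R + (1 / ((m : ℝ) + 1)) • (1 : Matrix (ι₀ × Fin 2) (ι₀ × Fin 2) ℝ)
      ∈ F '' Q := by
    intro m
    set δ : ℝ := 1 / ((m : ℝ) + 1) with hδ_def
    have hδpos : 0 < δ := by positivity
    have hδle : δ ≤ 1 := by
      rw [hδ_def, div_le_one (by positivity)]
      norm_num
    set R' := R + δ • (1 : Matrix (ι₀ × Fin 2) (ι₀ × Fin 2) ℝ) with hR'_def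
    have hR'app : ∀ u v : ι₀ × Fin 2, R' u v = R u v + δ * (if u = v then 1 else 0) := by
      intro u v
      simp [hR'_def, Matrix.one_apply, mul_ite]
    have hPD' : R'.PosDef := by
      refine PosDef.of_dotProduct_mulVec_pos ?_ ?_
      · ext u v
        simp only [conjTranspose_apply, star_trivial, hR'app]
        rw [hsym u v]
        simp [eq_comm]
      · intro x hx
        have h1 : star x ⬝ᵥ (R' *ᵥ x) = star x ⬝ᵥ (R *ᵥ x) + δ * (star x ⬝ᵥ x) := by
          rw [hR'_def, Matrix.add_mulVec, dotProduct_add, Matrix.smul_mulVec,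
            Matrix.one_mulVec, dotProduct_smul]
          simp [smul_eq_mul]
        rw [h1]
        have h2 : 0 ≤ star x ⬝ᵥ (R *ᵥ x) := hP.dotProduct_mulVec_nonneg x
        have h3 : 0 < star x ⬝ᵥ x := dotProduct_star_self_pos_iff.mpr hx
        nlinarith
    have hsym' : ∀ u v, R' u v = R' v u := by
      intro u v
      rw [hR'app, hR'app, hsym u v]
      simp [eq_comm]
    have hnn' : ∀ u v, 0 ≤ R' u v := by
      intro u v
      rw [hR'app]
      have := hnn u v
      split_ifs <;> linarith
    have hzero' : ∀ i j p, i ≠ j → R' (i, p) (j, p) = 0 := by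
      intro i j p hij
      rw [hR'app, hzero i j p hij]
      have : ¬ ((i, p) = (j, p)) := by simp [hij]
      simp [this]
    obtain ⟨z, hz0, hzb, hzeq⟩ := bipartite_posdef_decomp R' hPD' hsym' hnn' hzero'
    refine ⟨z, ?_, ?_⟩
    · rw [hQmem]
      intro t u
      refine ⟨hz0 t u, ?_⟩
      have hble : z t u ^ 2 ≤ R u u + 1 := by
        have hb := hzb t u
        rw [hR'app] at hb
        simp only [eq_self_iff_true, if_true, mul_one] at hb
        linarith
      have heq : z t u = Real.sqrt (z t u ^ 2) := (Real.sqrt_sq (hz0 t u)).symm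
      show z t u ≤ c u
      simp only [hc_def]
      rw [heq]
      exact Real.sqrt_le_sqrt hble
    · rw [hF_def]
      ext u v
      exact (hzeq u v).symm
  have htend : Filter.Tendsto
      (fun m : ℕ => R + (1 / ((m:ℝ) + 1)) • (1 : Matrix (ι₀ × Fin 2) (ι₀ × Fin 2) ℝ))
      Filter.atTop (nhds R) := by
    have h1 : Filter.Tendsto (fun m : ℕ => 1 / ((m:ℝ) + 1)) Filter.atTop (nhds 0) :=
      tendsto_one_div_add_atTop_nhds_zero_nat
    have h2 : Continuous fun δ : ℝ => R + δ • (1 : Matrix (ι₀ × Fin 2) (ι₀ × Fin 2) ℝ) :=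
      continuous_const.add (continuous_id.smul continuous_const)
    have h3 := (h2.tendsto 0).comp h1
    simpa [Function.comp_def] using h3
  have hRmem : R ∈ F '' Q :=
    himg.isClosed.mem_of_tendsto htend (Filter.Eventually.of_forall hmem)
  obtain ⟨z, hzQ, hzF⟩ := hRmem
  refine ⟨z, fun t u => ((hQmem z).mp hzQ t u).1, fun u v => ?_⟩
  rw [← hzF]
  rfl

lemma idTensor_entry {n m : ℕ} (Φ : Matrix (Fin n) (Fin n) ℂ →ₗ[ℂ] Matrix (Fin m) (Fin m) ℂ)
    (k : ℕ) (X : Matrix (Fin k × Fin n) (Fin k × Fin n) ℂ) (a b : Fin k) (p q : Fin m) :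
    idTensor Φ k X (a, p) (b, q) = ∑ i, ∑ j, X (a, i) (b, j) * choi Φ (i, p) (j, q) := by
  have hN : (Matrix.of fun i j => X (a, i) (b, j))
      = ∑ i : Fin n, ∑ j : Fin n, (X (a, i) (b, j)) • Matrix.single i j (1:ℂ) := by
    conv_lhs => rw [Matrix.matrix_eq_sum_single (Matrix.of fun i j => X (a, i) (b, j))]
    refine Finset.sum_congr rfl fun i _ => Finset.sum_congr rfl fun j _ => ?_
    rw [Matrix.smul_single, smul_eq_mul, mul_one]
    rfl
  show Φ (Matrix.of fun i j => X (a, i) (b, j)) p q = _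
  rw [hN, map_sum, Matrix.sum_apply]
  refine Finset.sum_congr rfl fun i _ => ?_
  rw [map_sum, Matrix.sum_apply]
  refine Finset.sum_congr rfl fun j _ => ?_
  rw [LinearMap.map_smul]
  rfl

lemma choi_isCP (Φ : Matrix (Fin 3) (Fin 3) ℂ →ₗ[ℂ] Matrix (Fin 2) (Fin 2) ℂ)
    (hTP : IsTP Φ) (hCPDNN : IsCPDNN Φ) : IsCPMat (choi Φ) := by
  classical
  -- Step 1: choi Φ is DNN
  set W : Matrix (Fin 3 × Fin 3) (Fin 3 × Fin 3) ℂ :=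
    Matrix.of fun u v => if u.1 = u.2 ∧ v.1 = v.2 then 1 else 0 with hW_def
  have hWdnn : IsDNNMat W := by
    constructor
    · set A : Matrix (Fin 1) (Fin 3 × Fin 3) ℂ :=
        Matrix.of fun _ u => if u.1 = u.2 then 1 else 0 with hA_def
      have : W = Aᴴ * A := by
        ext u v
        simp only [Matrix.mul_apply, Matrix.conjTranspose_apply, Fin.sum_univ_one, hA_def,
          hW_def, Matrix.of_apply]
        split_ifs with h1 h2 h3 h4 h5 <;> simp_all <;> try tauto
      rw [this]
      exact Matrix.posSemidef_conjTranspose_mul_self A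
    · intro u v
      simp only [hW_def, Matrix.of_apply]
      split_ifs <;> norm_num
  have hchoieq : idTensor Φ 3 W = choi Φ := by
    ext u v
    obtain ⟨a, p⟩ := u
    obtain ⟨b, q⟩ := v
    show Φ (Matrix.of fun i j => W (a, i) (b, j)) p q = Φ (Matrix.single a b 1) p q
    congr 2
  have hCdnn : IsDNNMat (choi Φ) := by
    rw [← hchoieq]
    exact hCPDNN 3 W hWdnn
  -- Step 2: zero pattern from trace preservation
  have hp2 : ∀ p : Fin 2, p = 0 ∨ p = 1 := by decide
  have hzeroC : ∀ (i j : Fin 3) (p : Fin 2), i ≠ j → choi Φ (i, p) (j, p) = 0 := by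
    intro i j p hij
    have htr := hTP (Matrix.single i j 1)
    have htr2 : (Matrix.single i j (1:ℂ)).trace = 0 := by
      rw [Matrix.trace]
      apply Finset.sum_eq_zero
      intro d _
      simp only [Matrix.diag_apply, Matrix.single_apply]
      split_ifs with h
      · exact absurd (h.1.trans h.2.symm) hij
      · rfl
    rw [htr2, Matrix.trace, Fin.sum_univ_two] at htr
    have h00 : Φ (Matrix.single i j 1) 0 0 = choi Φ (i, 0) (j, 0) := rfl
    have h11 : Φ (Matrix.single i j 1) 1 1 = choi Φ (i, 1) (j, 1) := rfl
    rw [Matrix.diag_apply, Matrix.diag_apply, h00, h11] at htr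
    have hre0 := (hCdnn.2 (i, 0) (j, 0)).1
    have him0 := (hCdnn.2 (i, 0) (j, 0)).2
    have hre1 := (hCdnn.2 (i, 1) (j, 1)).1
    have him1 := (hCdnn.2 (i, 1) (j, 1)).2
    have hresum : (choi Φ (i, 0) (j, 0)).re + (choi Φ (i, 1) (j, 1)).re = 0 := by
      have := congrArg Complex.re htr
      simpa using this
    have hz0 : choi Φ (i, 0) (j, 0) = 0 := by
      apply Complex.ext <;> simp [him0] <;> linarith
    have hz1 : choi Φ (i, 1) (j, 1) = 0 := by
      apply Complex.ext <;> simp [him1] <;> linarith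
    rcases hp2 p with rfl | rfl
    · exact hz0
    · exact hz1
  -- Step 3: transfer to a real matrix
  set Rm : Matrix (Fin 3 × Fin 2) (Fin 3 × Fin 2) ℝ :=
    Matrix.of fun u v => (choi Φ u v).re with hRm_def
  have hre : ∀ u v, choi Φ u v = ((Rm u v : ℝ) : ℂ) := by
    intro u v
    have := (hCdnn.2 u v).2
    apply Complex.ext
    · simp [hRm_def]
    · simp [hRm_def, this]
  have hRmP : Rm.PosSemidef := by
    refine PosSemidef.of_dotProduct_mulVec_nonneg ?_ ?_
    · ext u v
      have hherm := congrFun (congrFun hCdnn.1.1 u) v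
      simp only [Matrix.conjTranspose_apply] at hherm ⊢
      have : (choi Φ v u).re = (choi Φ u v).re := by
        rw [← hherm]
        simp [Complex.conj_re]
      simpa [hRm_def, star_trivial] using this
    · intro x
      set xc : (Fin 3 × Fin 2) → ℂ := fun u => ((x u : ℝ) : ℂ) with hxc_def
      have hdot : star xc ⬝ᵥ (choi Φ *ᵥ xc) = ((x ⬝ᵥ (Rm *ᵥ x) : ℝ) : ℂ) := by
        simp only [dotProduct, Matrix.mulVec, Pi.star_apply, hxc_def]
        push_cast
        refine Finset.sum_congr rfl fun u _ => ?_
        rw [Finset.mul_sum, Finset.mul_sum]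
        refine Finset.sum_congr rfl fun v _ => ?_
        rw [hre u v, Complex.star_def, Complex.conj_ofReal]
      have hpos := hCdnn.1.dotProduct_mulVec_nonneg xc
      rw [hdot] at hpos
      exact Complex.zero_le_real.mp hpos
  have hRnn : ∀ u v, 0 ≤ Rm u v := fun u v => (hCdnn.2 u v).1
  have hRzero : ∀ (i j : Fin 3) (p : Fin 2), i ≠ j → Rm (i, p) (j, p) = 0 := by
    intro i j p hij
    simp [hRm_def, hzeroC i j p hij]
  obtain ⟨z, hz0, hzeq⟩ := bipartite_psd_decomp Rm hRmP hRnn hRzero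
  -- Step 4: reindex by Fin
  refine ⟨Fintype.card ((Fin 3 × Fin 3) ⊕ (Fin 3 × Fin 2)),
    fun t => z ((Fintype.equivFin ((Fin 3 × Fin 3) ⊕ (Fin 3 × Fin 2))).symm t),
    fun t u => hz0 _ u, fun u v => ?_⟩
  rw [hre u v, hzeq u v]
  exact congrArg (fun r : ℝ => (r : ℂ))
    ((Equiv.sum_comp (Fintype.equivFin ((Fin 3 × Fin 3) ⊕ (Fin 3 × Fin 2))).symm
      fun t => z t u * z t v).symm)

/-- Every CPDNN qutrit-to-qubit quantum channel `Φ : M₃(ℂ) → M₂(ℂ)` is CPCP. -/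
theorem stmt8
    (Φ : Matrix (Fin 3) (Fin 3) ℂ →ₗ[ℂ] Matrix (Fin 2) (Fin 2) ℂ)
    (hCP : IsCPMap Φ) (hTP : IsTP Φ) (hCPDNN : IsCPDNN Φ) :
    IsCPCP Φ := by
  obtain ⟨S, zc, hzc0, hzc⟩ := choi_isCP Φ hTP hCPDNN
  intro k X hX
  obtain ⟨s, x, hx0, hxX⟩ := hX
  refine ⟨s * S, fun t u => ∑ i, x (finProdFinEquiv.symm t).1 (u.1, i)
      * zc (finProdFinEquiv.symm t).2 (i, u.2), ?_, ?_⟩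
  · intro t u
    exact Finset.sum_nonneg fun i _ => mul_nonneg (hx0 _ _) (hzc0 _ _)
  · rintro ⟨a, p⟩ ⟨b, q⟩
    rw [idTensor_entry]
    have key : (∑ i : Fin 3, ∑ j : Fin 3,
          (∑ t, x t (a,i) * x t (b,j)) * (∑ r, zc r (i,p) * zc r (j,q)))
        = ∑ t : Fin s, ∑ r : Fin S,
            (∑ i, x t (a,i) * zc r (i,p)) * (∑ j, x t (b,j) * zc r (j,q)) := by
      calc (∑ i : Fin 3, ∑ j : Fin 3,
              (∑ t, x t (a,i) * x t (b,j)) * (∑ r, zc r (i,p) * zc r (j,q)))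
          = ∑ i : Fin 3, ∑ j : Fin 3, ∑ t, ∑ r,
              (x t (a,i) * zc r (i,p)) * (x t (b,j) * zc r (j,q)) := by
            refine Finset.sum_congr rfl fun i _ => Finset.sum_congr rfl fun j _ => ?_
            rw [Finset.sum_mul_sum]
            exact Finset.sum_congr rfl fun t _ => Finset.sum_congr rfl fun r _ => by ring
        _ = ∑ i : Fin 3, ∑ t, ∑ j : Fin 3, ∑ r,
              (x t (a,i) * zc r (i,p)) * (x t (b,j) * zc r (j,q)) :=
            Finset.sum_congr rfl fun i _ => Finset.sum_comm
        _ = ∑ t, ∑ i : Fin 3, ∑ j : Fin 3, ∑ r,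
              (x t (a,i) * zc r (i,p)) * (x t (b,j) * zc r (j,q)) := Finset.sum_comm
        _ = ∑ t, ∑ i : Fin 3, ∑ r, ∑ j : Fin 3,
              (x t (a,i) * zc r (i,p)) * (x t (b,j) * zc r (j,q)) :=
            Finset.sum_congr rfl fun t _ => Finset.sum_congr rfl fun i _ => Finset.sum_comm
        _ = ∑ t, ∑ r, ∑ i : Fin 3, ∑ j : Fin 3,
              (x t (a,i) * zc r (i,p)) * (x t (b,j) * zc r (j,q)) :=
            Finset.sum_congr rfl fun t _ => Finset.sum_comm
        _ = ∑ t : Fin s, ∑ r : Fin S,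
              (∑ i, x t (a,i) * zc r (i,p)) * (∑ j, x t (b,j) * zc r (j,q)) :=
            Finset.sum_congr rfl fun t _ => Finset.sum_congr rfl fun r _ =>
              (Finset.sum_mul_sum _ _ _ _).symm
    have hsum : (∑ t' : Fin (s*S),
          (∑ i, x (finProdFinEquiv.symm t').1 (a,i) * zc (finProdFinEquiv.symm t').2 (i,p)) *
          (∑ j, x (finProdFinEquiv.symm t').1 (b,j) * zc (finProdFinEquiv.symm t').2 (j,q)))
        = ∑ tr : Fin s × Fin S,
            (∑ i, x tr.1 (a,i) * zc tr.2 (i,p)) * (∑ j, x tr.1 (b,j) * zc tr.2 (j,q)) :=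
      Equiv.sum_comp finProdFinEquiv.symm
        (fun tr => (∑ i, x tr.1 (a,i) * zc tr.2 (i,p)) * (∑ j, x tr.1 (b,j) * zc tr.2 (j,q)))
    have key2 : (∑ i : Fin 3, ∑ j : Fin 3,
          (∑ t, x t (a,i) * x t (b,j)) * (∑ r, zc r (i,p) * zc r (j,q)))
        = ∑ t' : Fin (s*S),
          (∑ i, x (finProdFinEquiv.symm t').1 (a,i) * zc (finProdFinEquiv.symm t').2 (i,p)) *
          (∑ j, x (finProdFinEquiv.symm t').1 (b,j) * zc (finProdFinEquiv.symm t').2 (j,q)) := by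
      rw [key, hsum, Fintype.sum_prod_type]
    calc (∑ i : Fin 3, ∑ j : Fin 3, X (a,i) (b,j) * choi Φ ((i,p)) ((j,q)))
        = ((∑ i : Fin 3, ∑ j : Fin 3,
            (∑ t, x t (a,i) * x t (b,j)) * (∑ r, zc r (i,p) * zc r (j,q)) : ℝ) : ℂ) := by
          rw [Complex.ofReal_sum]
          refine Finset.sum_congr rfl fun i _ => ?_
          rw [Complex.ofReal_sum]
          refine Finset.sum_congr rfl fun j _ => ?_
          rw [hxX (a,i) (b,j), hzc (i,p) (j,q), Complex.ofReal_mul]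
      _ = _ := by rw [key2]
end

section
/- Let Φ : M_n(ℂ) → M_m(ℂ) be a linear map. Then Φ is CPCP (i.e., for every k ∈ ℕ, (id_k ⊗ Φ) maps completely positive matrices in M_{kn} to completely positive matrices in M_{km}) if and only if its Choi matrix J(Φ) = Σ_{i,j=1}^n E_{ij} ⊗ Φ(E_{ij}) is a completely positive nm×nm matrix. -/
open Matrix
open scoped ComplexOrder

lemma sum_swap4 {M : Type*} [AddCommMonoid M] {ι κ σ τ : Type*}
    [Fintype ι] [Fintype κ] [Fintype σ] [Fintype τ] (f : ι → κ → σ → τ → M) :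
    ∑ i, ∑ j, ∑ s, ∑ t, f i j s t = ∑ s, ∑ t, ∑ i, ∑ j, f i j s t :=
  calc ∑ i, ∑ j, ∑ s, ∑ t, f i j s t
      = ∑ i, ∑ s, ∑ j, ∑ t, f i j s t :=
        Finset.sum_congr rfl fun i _ => Finset.sum_comm
    _ = ∑ s, ∑ i, ∑ j, ∑ t, f i j s t := Finset.sum_comm
    _ = ∑ s, ∑ i, ∑ t, ∑ j, f i j s t :=
        Finset.sum_congr rfl fun s _ => Finset.sum_congr rfl fun i _ => Finset.sum_comm
    _ = ∑ s, ∑ t, ∑ i, ∑ j, f i j s t :=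
        Finset.sum_congr rfl fun s _ => Finset.sum_comm

lemma phi_entry {n m : ℕ} (Φ : Matrix (Fin n) (Fin n) ℂ →ₗ[ℂ] Matrix (Fin m) (Fin m) ℂ)
    (X : Matrix (Fin n) (Fin n) ℂ) (p q : Fin m) :
    Φ X p q = ∑ i, ∑ j, X i j * choi Φ (i, p) (j, q) := by
  have h : Φ X = ∑ i, ∑ j, X i j • Φ (Matrix.single i j 1) := by
    conv_lhs => rw [matrix_eq_sum_single X]
    rw [map_sum]
    refine Finset.sum_congr rfl fun i _ => ?_
    rw [map_sum]
    refine Finset.sum_congr rfl fun j _ => ?_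
    rw [← Φ.map_smul, Matrix.smul_single, smul_eq_mul, mul_one]
  rw [h]
  simp [Matrix.sum_apply, choi]

/-- A linear map `Φ : Mₙ(ℂ) → Mₘ(ℂ)` is CPCP if and only if its Choi matrix
is completely positive. -/
theorem stmt10 (n m : ℕ)
    (Φ : Matrix (Fin n) (Fin n) ℂ →ₗ[ℂ] Matrix (Fin m) (Fin m) ℂ) :
    IsCPCP Φ ↔ IsCPMat (choi Φ) := by
  constructor
  · intro h
    have hΩ : IsCPMat (Matrix.of fun (ai : Fin n × Fin n) (bj : Fin n × Fin n) =>
        (if ai.1 = ai.2 then 1 else 0) * (if bj.1 = bj.2 then 1 else 0) : Matrix _ _ ℂ) := by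
      refine ⟨1, fun _ v => if v.1 = v.2 then 1 else 0, fun t i => by positivity, ?_⟩
      intro i j
      simp only [Matrix.of_apply, Fin.sum_univ_one]
      split_ifs <;> norm_num
    have h2 := h n _ hΩ
    have heq : choi Φ = idTensor Φ n
        (Matrix.of fun (ai : Fin n × Fin n) (bj : Fin n × Fin n) =>
          (if ai.1 = ai.2 then 1 else 0) * (if bj.1 = bj.2 then 1 else 0)) := by
      ext ⟨a, p⟩ ⟨b, q⟩
      simp only [choi, idTensor, Matrix.of_apply]
      have hM : (Matrix.single a b 1 : Matrix (Fin n) (Fin n) ℂ) =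
          Matrix.of fun i j => ((if a = i then 1 else 0) * (if b = j then 1 else 0) : ℂ) := by
        ext i j
        simp only [Matrix.single, Matrix.of_apply]
        by_cases hia : a = i <;> by_cases hjb : b = j <;> simp [hia, hjb]
      rw [hM]
    rw [heq]
    exact h2
  · rintro ⟨T, y, hy, hyC⟩ k X ⟨S, x, hx, hxX⟩
    refine ⟨S * T, fun u ap => ∑ i, x (finProdFinEquiv.symm u).1 (ap.1, i) *
        y (finProdFinEquiv.symm u).2 (i, ap.2), fun u ap => Finset.sum_nonneg fun i _ =>
        mul_nonneg (hx _ _) (hy _ _), ?_⟩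
    rintro ⟨a, p⟩ ⟨b, q⟩
    have hsum : ∀ F : Fin (S * T) → ℝ, ∑ u, F u = ∑ st : Fin S × Fin T, F (finProdFinEquiv st) :=
      fun F => (Fintype.sum_equiv finProdFinEquiv _ _ fun st => rfl).symm
    have key : ∀ i j, (Matrix.of fun i j => X (a, i) (b, j)) i j * choi Φ (i, p) (j, q)
        = (((∑ s, ∑ t, (x s (a, i) * y t (i, p)) * (x s (b, j) * y t (j, q)) : ℝ)) : ℂ) := by
      intro i j
      simp only [Matrix.of_apply]
      rw [hxX, hyC]
      push_cast
      rw [Finset.sum_mul_sum]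
      exact Finset.sum_congr rfl fun s _ => Finset.sum_congr rfl fun t _ => by ring
    simp only [idTensor, Matrix.of_apply]
    rw [phi_entry]
    simp only [key]
    rw [hsum]
    push_cast
    simp only [Equiv.symm_apply_apply]
    rw [Fintype.sum_prod_type, sum_swap4]
    refine Finset.sum_congr rfl fun s _ => Finset.sum_congr rfl fun t _ => ?_
    rw [Finset.sum_mul_sum]
end

section
/- Every CPCP linear map is CPDNN: if Φ : M_n(ℂ) → M_m(ℂ) is linear and for every k ∈ ℕ the map (id_k ⊗ Φ) sends completely positive matrices in M_{kn} to completely positive matrices in M_{km}, then for every k ∈ ℕ the map (id_k ⊗ Φ) sends doubly nonnegative matrices in M_{kn} to doubly nonnegative matrices in M_{km}. -/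
open Matrix
open scoped ComplexOrder

lemma my_posSemidef_sum {ι κ : Type*} [Fintype κ] (s : Finset ι)
    (f : ι → Matrix κ κ ℂ) (h : ∀ i ∈ s, (f i).PosSemidef) :
    (∑ i ∈ s, f i).PosSemidef := by
  classical
  induction s using Finset.induction_on with
  | empty => simpa using (Matrix.PosSemidef.zero : (0 : Matrix κ κ ℂ).PosSemidef)
  | insert _ _ hnot ih =>
      rw [Finset.sum_insert hnot]
      exact (h _ (Finset.mem_insert_self _ _)).add
        (ih fun i hi => h i (Finset.mem_insert_of_mem hi))

lemma my_phi_apply_eq {n m : ℕ}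
    (Φ : Matrix (Fin n) (Fin n) ℂ →ₗ[ℂ] Matrix (Fin m) (Fin m) ℂ)
    (M : Matrix (Fin n) (Fin n) ℂ) (p q : Fin m) :
    Φ M p q = ∑ i, ∑ j, M i j * choi Φ (i, p) (j, q) := by
  conv_lhs => rw [Matrix.matrix_eq_sum_single M]
  simp only [map_sum, Matrix.sum_apply]
  refine Finset.sum_congr rfl fun i _ => Finset.sum_congr rfl fun j _ => ?_
  have h1 : Matrix.single i j (M i j) = M i j • Matrix.single i j (1 : ℂ) := by
    rw [Matrix.smul_single, smul_eq_mul, mul_one]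
  rw [h1, _root_.map_smul, Matrix.smul_apply, smul_eq_mul]
  rfl

/-- Every CPCP linear map is CPDNN. -/
theorem stmt12 (n m : ℕ)
    (Φ : Matrix (Fin n) (Fin n) ℂ →ₗ[ℂ] Matrix (Fin m) (Fin m) ℂ)
    (hCPCP : IsCPCP Φ) : IsCPDNN Φ := by
  classical
  -- The maximally entangled CP matrix
  set E : Matrix (Fin n × Fin n) (Fin n × Fin n) ℂ :=
    Matrix.of fun ai bj => (if ai.1 = ai.2 then (1 : ℂ) else 0) *
      (if bj.1 = bj.2 then 1 else 0) with hE
  have hECP : IsCPMat E := by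
    refine ⟨1, fun _ p => if p.1 = p.2 then 1 else 0, fun t i => by positivity, ?_⟩
    rintro ⟨a, i⟩ ⟨b, j⟩
    simp only [hE, Matrix.of_apply, Fin.sum_univ_one]
    split_ifs <;> simp
  have hchoiE : idTensor Φ n E = choi Φ := by
    ext ⟨a, p⟩ ⟨b, q⟩
    simp only [idTensor, choi, Matrix.of_apply]
    have hmat : (Matrix.of fun i j => E (a, i) (b, j)) = Matrix.single a b (1 : ℂ) := by
      ext i j
      simp only [Matrix.of_apply, hE, Matrix.single, Matrix.of_apply]
      by_cases h1 : a = i <;> by_cases h2 : b = j <;> simp [h1, h2]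
    rw [hmat]
  have hchoiCP : IsCPMat (choi Φ) := hchoiE ▸ hCPCP n E hECP
  obtain ⟨s, x, hxnn, hx⟩ := hchoiCP
  intro k X hX
  obtain ⟨hXpsd, hXent⟩ := hX
  -- entry formula for the output
  have hidT : ∀ (a b : Fin k) (p q : Fin m), idTensor Φ k X (a, p) (b, q) =
      ∑ i, ∑ j, X (a, i) (b, j) * ((∑ t, x t (i, p) * x t (j, q) : ℝ) : ℂ) := by
    intro a b p q
    simp only [idTensor, Matrix.of_apply, my_phi_apply_eq]
    exact Finset.sum_congr rfl fun i _ => Finset.sum_congr rfl fun j _ => by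
      rw [hx (i, p) (j, q)]
  -- Kraus-type operators
  set B : Fin s → Matrix (Fin k × Fin n) (Fin k × Fin m) ℂ :=
    fun t => Matrix.of fun ai bp =>
      if ai.1 = bp.1 then ((x t (ai.2, bp.2) : ℝ) : ℂ) else 0 with hB
  have hrep : idTensor Φ k X = ∑ t, (B t)ᴴ * X * (B t) := by
    ext ⟨a, p⟩ ⟨b, q⟩
    rw [hidT a b p q, Matrix.sum_apply]
    have hterm : ∀ t, ((B t)ᴴ * X * (B t)) (a, p) (b, q) =
        ∑ i, ∑ j, ((x t (i, p) : ℝ) : ℂ) * X (a, i) (b, j) * ((x t (j, q) : ℝ) : ℂ) := by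
      intro t
      simp only [Matrix.mul_apply, Matrix.conjTranspose_apply, hB, Matrix.of_apply,
        Fintype.sum_prod_type, apply_ite (star : ℂ → ℂ), star_zero, ite_mul, zero_mul,
        mul_ite, mul_zero, Finset.sum_ite_eq, Finset.sum_ite_eq', Finset.mem_univ, if_true,
        RCLike.star_def, Complex.conj_ofReal]
      rw [Finset.sum_comm]
      simp only [Finset.sum_ite_eq', Finset.mem_univ, if_true]
      conv_rhs => rw [Finset.sum_comm]
      refine Finset.sum_congr rfl fun j _ => ?_
      rw [Finset.sum_comm]
      simp only [Finset.sum_ite_eq', Finset.mem_univ, if_true, Finset.sum_mul]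
    rw [Finset.sum_congr rfl fun t _ => hterm t]
    conv_rhs => rw [Finset.sum_comm]
    refine Finset.sum_congr rfl fun i _ => ?_
    conv_rhs => rw [Finset.sum_comm]
    refine Finset.sum_congr rfl fun j _ => ?_
    push_cast
    rw [Finset.mul_sum]
    exact Finset.sum_congr rfl fun t _ => by ring
  constructor
  · rw [hrep]
    exact my_posSemidef_sum _ _ fun t _ => hXpsd.conjTranspose_mul_mul_same (B t)
  · rintro ⟨a, p⟩ ⟨b, q⟩
    have hXr : ∀ (i j : Fin n), X (a, i) (b, j) = (((X (a, i) (b, j)).re : ℝ) : ℂ) := by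
      intro i j
      exact Complex.ext (by simp) (by simp [(hXent (a, i) (b, j)).2])
    have : idTensor Φ k X (a, p) (b, q) =
        ((∑ i, ∑ j, (X (a, i) (b, j)).re * (∑ t, x t (i, p) * x t (j, q)) : ℝ) : ℂ) := by
      rw [hidT a b p q, Complex.ofReal_sum]
      refine Finset.sum_congr rfl fun i _ => ?_
      rw [Complex.ofReal_sum]
      refine Finset.sum_congr rfl fun j _ => ?_
      rw [Complex.ofReal_mul]
      conv_lhs => rw [hXr i j]
    rw [this]
    constructor
    · simp only [Complex.ofReal_re]
      refine Finset.sum_nonneg fun i _ => Finset.sum_nonneg fun j _ => ?_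
      exact mul_nonneg (hXent (a, i) (b, j)).1
        (Finset.sum_nonneg fun t _ => mul_nonneg (hxnn t _) (hxnn t _))
    · simp
end

section
/- If A ∈ M_r(ℝ) is doubly nonnegative (positive semidefinite and entrywise nonnegative) and the graph G(A) of A is bipartite, then A is completely positive, i.e., A = Σ_{t=1}^s x_t x_tᵀ for some finitely many entrywise nonnegative vectors x_t ∈ ℝ^r. -/
open Matrix

set_option linter.unusedSectionVars false

section Aux

variable {ι : Type} [Fintype ι] [DecidableEq ι]


def bgBil (M : Matrix ι ι ℝ) (x y : ι → ℝ) : ℝ := ∑ p, ∑ q, M p q * x p * y q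

lemma bgBil_expand (M : Matrix ι ι ℝ) (x y : ι → ℝ) (t : ℝ) :
    bgBil M (fun k => x k + t * y k) (fun k => x k + t * y k)
      = bgBil M x x + t * bgBil M y x + t * bgBil M x y + t ^ 2 * bgBil M y y := by
  have h : ∀ p q, M p q * (x p + t * y p) * (x q + t * y q)
      = M p q * x p * x q + t * (M p q * y p * x q) + t * (M p q * x p * y q)
        + t ^ 2 * (M p q * y p * y q) := by intros; ring
  simp only [bgBil, h, Finset.sum_add_distrib, ← Finset.mul_sum]

lemma bgBil_sub_left (M : Matrix ι ι ℝ) (x y z : ι → ℝ) :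
    bgBil M (fun k => x k - y k) z = bgBil M x z - bgBil M y z := by
  simp only [bgBil, mul_sub, sub_mul, Finset.sum_sub_distrib]

lemma bgBil_sub_right (M : Matrix ι ι ℝ) (x y z : ι → ℝ) :
    bgBil M z (fun k => x k - y k) = bgBil M z x - bgBil M z y := by
  simp only [bgBil, mul_sub, sub_mul, Finset.sum_sub_distrib]

lemma bgBil_delta_left (M : Matrix ι ι ℝ) (j : ι) (y : ι → ℝ) :
    bgBil M (fun p => if p = j then 1 else 0) y = ∑ q, M j q * y q := by
  unfold bgBil
  rw [Finset.sum_eq_single j (fun b _ hb => by simp [hb]) (by simp)]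
  simp

lemma bgBil_delta_right (M : Matrix ι ι ℝ) (j : ι) (y : ι → ℝ) :
    bgBil M y (fun q => if q = j then 1 else 0) = ∑ p, M p j * y p := by
  unfold bgBil
  rw [Finset.sum_comm]
  rw [Finset.sum_eq_single j (fun b _ hb => by simp [hb]) (by simp)]
  simp

lemma bgBil_self_nonneg (M : Matrix ι ι ℝ) (hM : M.PosSemidef) (x : ι → ℝ) :
    0 ≤ bgBil M x x := by
  have := hM.dotProduct_mulVec_nonneg x
  simp only [star_trivial, dotProduct, Matrix.mulVec, Finset.mul_sum] at this
  simpa only [bgBil] using le_of_le_of_eq this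
    (Finset.sum_congr rfl fun p _ => Finset.sum_congr rfl fun q _ => by ring)

lemma bgBil_continuous (M : Matrix ι ι ℝ) : Continuous (fun x : ι → ℝ => bgBil M x x) := by
  unfold bgBil
  exact continuous_finset_sum _ fun p _ => continuous_finset_sum _ fun q _ =>
    ((continuous_const.mul (continuous_apply p)).mul (continuous_apply q))

/-- tiny calculus lemma: if `0 ≤ 2*t*a + t^2*c` for all small positive `t`, then `0 ≤ a`. -/
lemma bgSmall (a c t0 : ℝ) (ht0 : 0 < t0)
    (h : ∀ t, 0 < t → t ≤ t0 → 0 ≤ 2 * t * a + t ^ 2 * c) : 0 ≤ a := by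
  by_contra hneg
  push_neg at hneg
  rcases le_or_gt c 0 with hc | hc
  · have := h t0 ht0 le_rfl
    nlinarith
  · set t := min t0 (-a / c) with htdef
    have ht1 : 0 < t := lt_min ht0 (div_pos (by linarith) hc)
    have ht2 : t ≤ t0 := min_le_left _ _
    have ht3 : t ≤ -a / c := min_le_right _ _
    have := h t ht1 ht2
    have htc : t * c ≤ -a := by
      have h2 : t * c ≤ (-a / c) * c := mul_le_mul_of_nonneg_right ht3 hc.le
      rwa [div_mul_cancel₀ _ hc.ne'] at h2
    nlinarith

/-- The key scaling lemma: a PSD matrix with nonpositive off-diagonal entries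
admits a strictly positive vector `d` with `M d ≥ 0` entrywise. -/
lemma bgScaling : ∀ (n : ℕ) (ι : Type) [Fintype ι] [DecidableEq ι], Fintype.card ι ≤ n →
    ∀ (M : Matrix ι ι ℝ), M.PosSemidef → (∀ i j, i ≠ j → M i j ≤ 0) →
    ∃ d : ι → ℝ, (∀ i, 0 < d i) ∧ ∀ i, 0 ≤ ∑ j, M i j * d j := by
  intro n
  induction n with
  | zero =>
    intro ι _ _ hcard M _ _
    have : IsEmpty ι := Fintype.card_eq_zero_iff.mp (Nat.le_zero.mp hcard)
    exact ⟨fun _ => 1, fun i => isEmptyElim i, fun i => isEmptyElim i⟩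
  | succ n ih =>
    intro ι _ _ hcard M hPSD hZ
    rcases isEmpty_or_nonempty ι with hE | hNE
    · exact ⟨fun _ => 1, fun i => isEmptyElim i, fun i => isEmptyElim i⟩
    -- symmetry of M
    have hsym : ∀ i j, M j i = M i j := fun i j => by
      have := hPSD.1.apply i j; simpa using this
    -- minimize the quadratic form on the simplex
    obtain ⟨i₀⟩ := hNE
    have hsimplexne : (stdSimplex ℝ ι).Nonempty := by
      refine ⟨fun k => if k = i₀ then 1 else 0, fun k => by positivity, by simp⟩
    obtain ⟨d, hdmem, hdmin⟩ := (isCompact_stdSimplex ℝ ι).exists_isMinOn hsimplexne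
      (bgBil_continuous M).continuousOn
    have hd0 : ∀ i, 0 ≤ d i := hdmem.1
    have hdsum : ∑ i, d i = 1 := hdmem.2
    set R : ι → ℝ := fun i => ∑ j, M i j * d j with hR
    -- first-order optimality
    have step1 : ∀ i j : ι, d i ≠ 0 → R i ≤ R j := by
      intro i j hdi
      rcases eq_or_ne i j with rfl | hij
      · exact le_rfl
      have hdi' : 0 < d i := lt_of_le_of_ne (hd0 i) (Ne.symm hdi)
      set w : ι → ℝ := fun k => (if k = j then 1 else 0) - (if k = i then 1 else 0) with hw
      have key : ∀ t, 0 < t → t ≤ d i → 0 ≤ 2 * t * (R j - R i) + t ^ 2 * bgBil M w w := by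
        intro t ht1 ht2
        set g : ι → ℝ := fun k => d k + t * w k with hg
        have hgmem : g ∈ stdSimplex ℝ ι := by
          constructor
          · intro k
            by_cases hki : k = i
            · subst hki
              have hgk : g k = d k - t := by simp [hg, hw, if_neg hij]; ring
              rw [hgk]; linarith
            · have : 0 ≤ t * w k := by
                by_cases hkj : k = j
                · subst hkj; simp [hw, hki]; positivity
                · simp [hw, hki, hkj]
              simpa [hg] using add_nonneg (hd0 k) this
          · have : ∑ k, g k = ∑ k, d k + t * ((∑ k, if k = j then (1:ℝ) else 0)
                - (∑ k, if k = i then (1:ℝ) else 0)) := by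
              simp only [hg, hw, Finset.sum_add_distrib, ← Finset.mul_sum,
                Finset.sum_sub_distrib]
            simp [this, hdsum]
        have hle : bgBil M d d ≤ bgBil M g g := hdmin hgmem
        have hexp : bgBil M g g = bgBil M d d + t * bgBil M w d + t * bgBil M d w
            + t ^ 2 * bgBil M w w := bgBil_expand M d w t
        have hwd : bgBil M w d = R j - R i := by
          rw [hw, bgBil_sub_left, bgBil_delta_left, bgBil_delta_left]
        have hdw : bgBil M d w = R j - R i := by
          rw [hw, bgBil_sub_right, bgBil_delta_right, bgBil_delta_right]
          simp only [hR]
          rw [show (∑ p, M p j * d p) = ∑ p, M j p * d p from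
            Finset.sum_congr rfl fun p _ => by rw [hsym]]
          rw [show (∑ p, M p i * d p) = ∑ p, M i p * d p from
            Finset.sum_congr rfl fun p _ => by rw [hsym]]
        nlinarith [hle, hexp, hwd, hdw]
      exact sub_nonneg.mp (bgSmall _ _ _ hdi' key)
    -- the common value on the support is nonnegative
    obtain ⟨isup, _, hisup⟩ := Finset.exists_ne_zero_of_sum_ne_zero
      (by rw [hdsum]; norm_num : ∑ i, d i ≠ 0)
    have hRall : ∀ j, R isup ≤ R j := fun j => step1 isup j hisup
    have hsum_dR : ∑ i, d i * R i = R isup := by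
      have : ∀ i, d i * R i = d i * R isup := by
        intro i
        by_cases hdi : d i = 0
        · simp [hdi]
        · rw [le_antisymm (step1 i isup hdi) (hRall i)]
      rw [Finset.sum_congr rfl fun i _ => this i, ← Finset.sum_mul, hdsum, one_mul]
    have hRpos : 0 ≤ R isup := by
      rw [← hsum_dR]
      have h1 : bgBil M d d = ∑ i, d i * R i := by
        simp only [bgBil, hR, Finset.mul_sum]
        exact Finset.sum_congr rfl fun p _ => Finset.sum_congr rfl fun q _ => by ring
      rw [← h1]; exact bgBil_self_nonneg M hPSD d
    have hRnn : ∀ i, 0 ≤ R i := fun i => le_trans hRpos (hRall i)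
    -- if d is already positive, we are done; otherwise recurse on the zero set
    by_cases hall : ∀ i, d i ≠ 0
    · exact ⟨d, fun i => lt_of_le_of_ne (hd0 i) (Ne.symm (hall i)), hRnn⟩
    push_neg at hall
    -- entries between the zero set and the support vanish
    have key0 : ∀ i, d i = 0 → ∀ k, d k ≠ 0 → M i k = 0 := by
      intro i hdi k hdk
      have hterm : ∀ j, M i j * d j ≤ 0 := by
        intro j
        rcases eq_or_ne j i with rfl | hji
        · simp [hdi]
        · exact mul_nonpos_of_nonpos_of_nonneg (hZ i j (Ne.symm hji)) (hd0 j)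
      have hzero : ∑ j, M i j * d j = 0 :=
        le_antisymm (Finset.sum_nonpos fun j _ => hterm j) (hRnn i)
      have := (Finset.sum_eq_zero_iff_of_nonpos (fun j _ => hterm j)).mp hzero
        k (Finset.mem_univ k)
      rcases mul_eq_zero.mp this with h | h
      · exact h
      · exact absurd h hdk
    -- recurse on the zero set
    have hcard' : Fintype.card {i // d i = 0} ≤ n := by
      have : Fintype.card {i // d i = 0} < Fintype.card ι :=
        Fintype.card_subtype_lt (x := isup) hisup
      omega
    obtain ⟨d', hd'pos, hd'row⟩ := ih {i // d i = 0} hcard'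
      (M.submatrix Subtype.val Subtype.val) (hPSD.submatrix _)
      (fun i j hij => hZ i.val j.val (fun h => hij (Subtype.ext h)))
    classical
    refine ⟨fun i => if h : d i = 0 then d' ⟨i, h⟩ else d i, ?_, ?_⟩
    · intro i
      by_cases h : d i = 0
      · simpa [h] using hd'pos ⟨i, h⟩
      · simpa [h] using lt_of_le_of_ne (hd0 i) (Ne.symm h)
    · intro i
      by_cases h : d i = 0
      · -- row in the zero set: only the zero-set entries contribute
        have hvanish : ∀ j, (M i j * if h' : d j = 0 then d' ⟨j, h'⟩ else d j) ≠ 0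
            → d j = 0 := by
          intro j hne
          by_contra hdj
          exact hne (by simp [dif_neg hdj, key0 i h j hdj])
        have heq : (∑ j, M i j * if h' : d j = 0 then d' ⟨j, h'⟩ else d j)
            = ∑ j : {k // d k = 0}, M i j.val * d' j := by
          rw [← Finset.sum_filter_of_ne (fun j _ hne => hvanish j hne)]
          rw [Finset.sum_subtype (p := fun j => d j = 0)
            (Finset.univ.filter fun j => d j = 0) (fun j => by simp)
            (fun j => M i j * if h' : d j = 0 then d' ⟨j, h'⟩ else d j)]
          exact Finset.sum_congr rfl fun j _ => by rw [dif_pos j.2]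
        rw [heq]
        exact hd'row ⟨i, h⟩
      · -- row in the support: the zero-set entries have vanishing coefficients
        have heq : (∑ j, M i j * if h' : d j = 0 then d' ⟨j, h'⟩ else d j)
            = ∑ j, M i j * d j := by
          refine Finset.sum_congr rfl fun j _ => ?_
          by_cases h' : d j = 0
          · rw [hsym j i] at *
            rw [key0 j h' i h]; simp
          · rw [dif_neg h']
        rw [heq]
        exact hRnn i

/-- A finite sum of rank-one matrices on nonnegative vectors, indexed by any
fintype, is completely positive. -/
lemma bgCP_of_fintype {ι κ : Type*} [Fintype ι] [Fintype κ] (A : Matrix ι ι ℝ)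
    (y : κ → ι → ℝ) (h0 : ∀ k i, 0 ≤ y k i)
    (hA : A = ∑ k, Matrix.vecMulVec (y k) (y k)) : IsCPMatrix A := by
  refine ⟨Fintype.card κ, fun t => y ((Fintype.equivFin κ).symm t), fun t i => h0 _ i, ?_⟩
  rw [hA, Equiv.sum_comp (Fintype.equivFin κ).symm
    (fun k => Matrix.vecMulVec (y k) (y k))]

end Aux

/-- Berman–Grone: a doubly nonnegative matrix whose graph is bipartite (there
is a set `S` of vertices such that every edge, i.e. every pair `i ≠ j` with
`A i j ≠ 0`, has exactly one endpoint in `S`) is completely positive. -/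
theorem stmt14 (r : ℕ) (A : Matrix (Fin r) (Fin r) ℝ)
    (hPSD : A.PosSemidef) (hNN : ∀ i j, 0 ≤ A i j)
    (hBip : ∃ S : Set (Fin r), ∀ i j, i ≠ j → A i j ≠ 0 →
      (i ∈ S ∧ j ∉ S) ∨ (i ∉ S ∧ j ∈ S)) :
    IsCPMatrix A := by
  classical
  obtain ⟨S, hS⟩ := hBip
  set E : Fin r → ℝ := fun i => if i ∈ S then 1 else -1 with hE
  have hAsym : ∀ i j, A j i = A i j := fun i j => by
    have := hPSD.1.apply i j; simpa using this
  have hcross : ∀ i j, i ≠ j → E i * E j * A i j = -A i j := by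
    intro i j hij
    by_cases hA0 : A i j = 0
    · rw [hA0]; ring
    · rcases hS i j hij hA0 with ⟨h1, h2⟩ | ⟨h1, h2⟩
      · simp only [hE, if_pos h1, if_neg h2]; ring
      · simp only [hE, if_neg h1, if_pos h2]; ring
  have hEsq : ∀ i, E i * E i = 1 := by
    intro i; by_cases h : i ∈ S <;> simp [hE, h]
  set M : Matrix (Fin r) (Fin r) ℝ := Matrix.of fun i j => E i * E j * A i j with hM
  have hMPSD : M.PosSemidef := by
    refine Matrix.PosSemidef.of_dotProduct_mulVec_nonneg ?_ ?_
    · ext i j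
      simp only [Matrix.conjTranspose_apply, Matrix.of_apply, star_trivial, hM]
      rw [hAsym i j]; ring
    · intro x
      have h1 : star x ⬝ᵥ M.mulVec x
          = star (fun i => E i * x i) ⬝ᵥ A.mulVec (fun i => E i * x i) := by
        simp only [star_trivial, dotProduct, Matrix.mulVec, Finset.mul_sum,
          Matrix.of_apply, hM]
        exact Finset.sum_congr rfl fun i _ => Finset.sum_congr rfl fun j _ => by ring
      rw [h1]
      exact hPSD.dotProduct_mulVec_nonneg _
  obtain ⟨d, hdpos, hdrow⟩ := bgScaling r (Fin r) (by simp) M hMPSD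
    (fun i j hij => by
      have := hcross i j hij
      simp only [hM, Matrix.of_apply]
      rw [this]
      linarith [hNN i j])
  -- diagonal dominance after scaling
  have hdom : ∀ p, (∑ j ∈ Finset.univ.erase p, A p j * d j) ≤ A p p * d p := by
    intro p
    have h0 := hdrow p
    rw [← Finset.sum_erase_add _ _ (Finset.mem_univ p)] at h0
    have h1 : (∑ j ∈ Finset.univ.erase p, M p j * d j)
        = -∑ j ∈ Finset.univ.erase p, A p j * d j := by
      rw [← Finset.sum_neg_distrib]
      refine Finset.sum_congr rfl fun j hj => ?_
      have hjp : p ≠ j := fun h => (Finset.mem_erase.mp hj).1 h.symm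
      have := hcross p j hjp
      simp only [hM, Matrix.of_apply]
      rw [this]; ring
    have h2 : M p p * d p = A p p * d p := by
      simp only [hM, Matrix.of_apply]
      rw [hEsq p]; ring
    rw [h1, h2] at h0
    linarith
  -- the explicit completely positive decomposition
  set u : Fin r × Fin r → Fin r → ℝ := fun ij k =>
    if ij.1 = ij.2 then 0 else
      if k = ij.1 then Real.sqrt (A ij.1 ij.2 * d ij.2 / (2 * d ij.1))
      else if k = ij.2 then Real.sqrt (A ij.1 ij.2 * d ij.1 / (2 * d ij.2)) else 0
    with hu
  set c : Fin r → ℝ := fun p => A p p - (∑ j ∈ Finset.univ.erase p, A p j * d j) / d p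
    with hc
  have hcnn : ∀ p, 0 ≤ c p := by
    intro p
    rw [hc]
    have h1 : (∑ j ∈ Finset.univ.erase p, A p j * d j) / d p ≤ A p p := by
      rw [div_le_iff₀ (hdpos p)]
      exact hdom p
    dsimp only
    linarith
  set y : (Fin r × Fin r) ⊕ (Fin r) → Fin r → ℝ :=
    Sum.elim u (fun p k => if k = p then Real.sqrt (c p) else 0) with hy
  have hynn : ∀ k i, 0 ≤ y k i := by
    rintro (ij | p) i
    · simp only [hy, Sum.elim_inl, hu]
      split_ifs <;> positivity
    · simp only [hy, Sum.elim_inr]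
      split_ifs <;> positivity
  refine bgCP_of_fintype A y hynn ?_
  ext p q
  rw [Matrix.sum_apply, Fintype.sum_sum_type]
  simp only [hy, Sum.elim_inl, Sum.elim_inr, Matrix.vecMulVec_apply]
  have hdiag : (∑ p' : Fin r, (if p = p' then Real.sqrt (c p') else 0)
      * (if q = p' then Real.sqrt (c p') else 0)) = if p = q then c p else 0 := by
    rw [Finset.sum_eq_single p (fun b _ hb => by simp [(Ne.symm hb : p ≠ b)]) (by simp)]
    by_cases hpq : p = q
    · subst hpq
      simp [Real.mul_self_sqrt (hcnn p)]
    · simp [hpq, Ne.symm hpq]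
  rw [hdiag]
  have hq4 : ∀ (i j k l : Fin r), 0 ≤ A i j * d k / (2 * d l) := fun i j k l =>
    div_nonneg (mul_nonneg (hNN i j) (hdpos k).le) (by linarith [hdpos l])
  by_cases hpq : p = q
  · -- diagonal entry
    subst hpq
    rw [if_pos rfl]
    have hpair : (∑ ij : Fin r × Fin r, u ij p * u ij p)
        = (∑ j ∈ Finset.univ.erase p, A p j * d j) / d p := by
      rw [Fintype.sum_prod_type]
      rw [← Finset.sum_erase_add _ _ (Finset.mem_univ p)]
      have hA1 : ∀ i ∈ Finset.univ.erase p,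
          (∑ j, u (i, j) p * u (i, j) p) = A p i * d i / (2 * d p) := by
        intro i hi
        have hip : i ≠ p := (Finset.mem_erase.mp hi).1
        rw [Finset.sum_eq_single p ?_ (by simp)]
        · have huval : u (i, p) p = Real.sqrt (A i p * d i / (2 * d p)) := by
            simp [hu, hip, Ne.symm hip]
          rw [huval, Real.mul_self_sqrt (hq4 i p i p), hAsym p i]
        · intro b _ hb
          by_cases hib : i = b
          · simp [hu, hib]
          · simp [hu, hib, Ne.symm hip, (Ne.symm hb : p ≠ b)]
      have hA2 : (∑ j, u (p, j) p * u (p, j) p)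
          = ∑ j ∈ Finset.univ.erase p, A p j * d j / (2 * d p) := by
        rw [← Finset.sum_erase_add _ _ (Finset.mem_univ p)]
        have : u (p, p) p = 0 := by simp [hu]
        rw [this]
        rw [mul_zero, add_zero]
        refine Finset.sum_congr rfl fun j hj => ?_
        have hjp : p ≠ j := fun h => (Finset.mem_erase.mp hj).1 h.symm
        have huval : u (p, j) p = Real.sqrt (A p j * d j / (2 * d p)) := by
          simp [hu, hjp]
        rw [huval, Real.mul_self_sqrt (hq4 p j j p)]
      rw [Finset.sum_congr rfl hA1, hA2, ← Finset.sum_add_distrib, Finset.sum_div]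
      refine Finset.sum_congr rfl fun j hj => ?_
      have hdp := (hdpos p).ne'
      field_simp
      ring
    rw [hpair]
    simp only [hc]
    ring
  · -- off-diagonal entry
    rw [if_neg hpq, add_zero]
    have hsupp : ∀ ij : Fin r × Fin r,
        ij ∉ ({(p, q), (q, p)} : Finset (Fin r × Fin r)) → u ij p * u ij q = 0 := by
      rintro ⟨i, j⟩ hmem
      simp only [Finset.mem_insert, Finset.mem_singleton, Prod.mk.injEq, not_or,
        not_and] at hmem
      obtain ⟨hm1, hm2⟩ := hmem
      by_cases hij : i = j
      · simp [hu, hij]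
      by_cases hpi : p = i
      · by_cases hqj : q = j
        · exact absurd hqj.symm (hm1 hpi.symm)
        · have hqi : q ≠ i := fun h => hpq (hpi.trans h.symm)
          have : u (i, j) q = 0 := by simp [hu, hij, hqi, hqj]
          rw [this, mul_zero]
      · by_cases hpj : p = j
        · by_cases hqi : q = i
          · exact absurd hpj.symm (hm2 hqi.symm)
          · have hqj : q ≠ j := fun h => hpq (hpj.trans h.symm)
            have : u (i, j) q = 0 := by simp [hu, hij, hqi, hqj]
            rw [this, mul_zero]
        · have : u (i, j) p = 0 := by simp [hu, hij, hpi, hpj]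
          rw [this, zero_mul]
    rw [← Finset.sum_subset (Finset.subset_univ {(p, q), (q, p)})
      (fun x _ hx => hsupp x hx)]
    rw [Finset.sum_pair (by simp [hpq] : ((p, q) : Fin r × Fin r) ≠ (q, p))]
    have e1 : u (p, q) p * u (p, q) q = A p q / 2 := by
      have hv1 : u (p, q) p = Real.sqrt (A p q * d q / (2 * d p)) := by
        simp [hu, hpq]
      have hv2 : u (p, q) q = Real.sqrt (A p q * d p / (2 * d q)) := by
        simp [hu, hpq, Ne.symm hpq]
      rw [hv1, hv2, ← Real.sqrt_mul (hq4 p q q p)]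
      rw [show A p q * d q / (2 * d p) * (A p q * d p / (2 * d q)) = (A p q / 2) ^ 2 by
        have h1 := (hdpos p).ne'
        have h2 := (hdpos q).ne'
        field_simp]
      exact Real.sqrt_sq (div_nonneg (hNN p q) (by norm_num))
    have e2 : u (q, p) p * u (q, p) q = A p q / 2 := by
      have hv1 : u (q, p) p = Real.sqrt (A q p * d q / (2 * d p)) := by
        simp [hu, hpq, Ne.symm hpq]
      have hv2 : u (q, p) q = Real.sqrt (A q p * d p / (2 * d q)) := by
        simp [hu, Ne.symm hpq]
      rw [hv1, hv2, ← Real.sqrt_mul (hq4 q p q p)]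
      rw [show A q p * d q / (2 * d p) * (A q p * d p / (2 * d q)) = (A q p / 2) ^ 2 by
        have h1 := (hdpos p).ne'
        have h2 := (hdpos q).ne'
        field_simp]
      rw [Real.sqrt_sq (div_nonneg (hNN q p) (by norm_num)), hAsym p q]
    rw [e1, e2]
    ring
end
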